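/- arXiv:1811.08683 — 6 statements merged into one kernel-verified Lean document; each statement's English description precedes it below -/
import Mathlib

section
/- For a connected weighted graph with Laplacian B = K B_d K^T (K the incidence matrix, B_d the diagonal matrix of positive edge weights), and any vector ν_rs with +1 at node r, -1 at node s, and zeros elsewhere, the pseudoinverse identity (B + b_rs ν_rs ν_rs^T)^† ν_rs = (1 + b_rs ν_rs^T B^† ν_rs)^{-1} B^† ν_rs holds, provided 1 + b_rs ν_rs^T B^† ν_rs ≠ 0. -/
open Matrix BigOperators

/-- The weighted Laplacian of a weight function `w` on `Fin N`. -/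
def lapMat {N : ℕ} (w : Fin N → Fin N → ℝ) : Matrix (Fin N) (Fin N) ℝ :=
  fun i j => if i = j then ∑ k, w i k else - w i j

/-- Symmetric, nonnegative weights with zero diagonal. -/
def IsWeight {N : ℕ} (w : Fin N → Fin N → ℝ) : Prop :=
  (∀ i j, w i j = w j i) ∧ (∀ i j, 0 ≤ w i j) ∧ (∀ i, w i i = 0)

/-- The simple graph whose edges are the pairs with nonzero weight. -/
def wGraph {N : ℕ} (w : Fin N → Fin N → ℝ) : SimpleGraph (Fin N) where
  Adj i j := i ≠ j ∧ (w i j ≠ 0 ∨ w j i ≠ 0)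
  symm := ⟨fun i j ⟨h1, h2⟩ => ⟨h1.symm, h2.symm⟩⟩
  loopless := ⟨fun i h => h.1 rfl⟩

/-- The dipole vector `ν_rs`: `+1` at `r`, `-1` at `s`, `0` elsewhere. -/
def dipole {N : ℕ} (r s : Fin N) : Fin N → ℝ :=
  fun i => (if i = r then (1:ℝ) else 0) - (if i = s then (1:ℝ) else 0)

/-- `Bd` is the Moore-Penrose pseudoinverse of `B` (the four Penrose axioms). -/
def IsMoorePenrose {N : ℕ} (B Bd : Matrix (Fin N) (Fin N) ℝ) : Prop :=
  B * Bd * B = B ∧ Bd * B * Bd = Bd ∧ (B * Bd)ᵀ = B * Bd ∧ (Bd * B)ᵀ = Bd * B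

section Aux

variable {N : ℕ}

lemma my_lapMat_transpose (w : Fin N → Fin N → ℝ) (hw : IsWeight w) :
    (lapMat w)ᵀ = lapMat w := by
  ext i j
  simp only [transpose_apply, lapMat]
  by_cases h : i = j
  · subst h; rfl
  · simp [h, Ne.symm h, hw.1 i j]

lemma my_lapMat_mulVec (w : Fin N → Fin N → ℝ) (hw : IsWeight w) (v : Fin N → ℝ) (i : Fin N) :
    (lapMat w *ᵥ v) i = ∑ j, w i j * (v i - v j) := by
  have h1 : ∀ j : Fin N, lapMat w i j * v j
      = (if i = j then ∑ k, w i k else 0) * v j - w i j * v j := by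
    intro j
    by_cases h : i = j
    · subst h; simp [lapMat, hw.2.2 i]
    · simp only [lapMat, if_neg h]; ring
  calc (lapMat w *ᵥ v) i = ∑ j, lapMat w i j * v j := rfl
    _ = ∑ j, ((if i = j then ∑ k, w i k else 0) * v j - w i j * v j) :=
        Finset.sum_congr rfl fun j _ => h1 j
    _ = (∑ k, w i k) * v i - ∑ j, w i j * v j := by
        rw [Finset.sum_sub_distrib]
        congr 1
        simp
    _ = ∑ j, w i j * (v i - v j) := by
        rw [Finset.sum_mul, ← Finset.sum_sub_distrib]
        exact Finset.sum_congr rfl fun j _ => by ring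

lemma my_lapMat_quadform (w : Fin N → Fin N → ℝ) (hw : IsWeight w) (v : Fin N → ℝ) :
    2 * (v ⬝ᵥ lapMat w *ᵥ v) = ∑ i, ∑ j, w i j * (v i - v j)^2 := by
  have hS : v ⬝ᵥ lapMat w *ᵥ v = ∑ i, ∑ j, w i j * (v i * (v i - v j)) := by
    simp only [dotProduct]
    refine Finset.sum_congr rfl fun i _ => ?_
    rw [my_lapMat_mulVec w hw v i, Finset.mul_sum]
    exact Finset.sum_congr rfl fun j _ => by ring
  have key : ∑ i, ∑ j, w i j * (v i * (v i - v j))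
      = ∑ i, ∑ j, w i j * (v j * (v j - v i)) := by
    rw [Finset.sum_comm]
    exact Finset.sum_congr rfl fun i _ => Finset.sum_congr rfl fun j _ => by rw [hw.1 j i]
  rw [hS, two_mul]
  nth_rewrite 2 [key]
  rw [← Finset.sum_add_distrib]
  refine Finset.sum_congr rfl fun i _ => ?_
  rw [← Finset.sum_add_distrib]
  exact Finset.sum_congr rfl fun j _ => by ring

lemma my_lap_ker_const (w : Fin N → Fin N → ℝ) (hw : IsWeight w)
    (hconn : (wGraph w).Connected) (v : Fin N → ℝ)
    (hv : lapMat w *ᵥ v = 0) : ∀ i j, v i = v j := by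
  have hq : ∑ i, ∑ j, w i j * (v i - v j)^2 = 0 := by
    rw [← my_lapMat_quadform w hw v, hv]
    simp
  have hterm : ∀ i j, w i j * (v i - v j)^2 = 0 := by
    intro i j
    have h1 := (Finset.sum_eq_zero_iff_of_nonneg
      (fun i _ => Finset.sum_nonneg (fun j _ => mul_nonneg (hw.2.1 i j) (sq_nonneg _)))).mp
      hq i (Finset.mem_univ i)
    exact (Finset.sum_eq_zero_iff_of_nonneg
      (fun j _ => mul_nonneg (hw.2.1 i j) (sq_nonneg _))).mp h1 j (Finset.mem_univ j)
  have step : ∀ a b, (wGraph w).Adj a b → v a = v b := by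
    intro a b hab
    have hwab : w a b ≠ 0 := by
      rcases hab.2 with h | h
      · exact h
      · rw [hw.1 a b]; exact h
    have h2 : (v a - v b)^2 = 0 := by
      rcases mul_eq_zero.mp (hterm a b) with h | h
      · exact absurd h hwab
      · exact h
    have h3 : v a - v b = 0 := pow_eq_zero_iff two_ne_zero |>.mp h2
    linarith
  intro i j
  obtain ⟨p⟩ := hconn.preconnected i j
  induction p with
  | nil => rfl
  | cons h p ih => exact (step _ _ h).trans ih

lemma my_vecMulVec_mulVec (a b v : Fin N → ℝ) :
    (vecMulVec a b) *ᵥ v = (b ⬝ᵥ v) • a := by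
  funext i
  simp only [mulVec, dotProduct, vecMulVec_apply, Pi.smul_apply, smul_eq_mul,
    Finset.sum_mul, Finset.mul_sum]
  exact Finset.sum_congr rfl fun j _ => by ring

/-- symmetric matrices can be moved across a dot product -/
lemma my_dot_symm (A : Matrix (Fin N) (Fin N) ℝ) (hA : Aᵀ = A) (x y : Fin N → ℝ) :
    x ⬝ᵥ A *ᵥ y = (A *ᵥ x) ⬝ᵥ y := by
  rw [dotProduct_mulVec, ← vecMul_transpose, hA]

lemma my_u_dot_dag (A Ad : Matrix (Fin N) (Fin N) ℝ) (h : IsMoorePenrose A Ad)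
    (u : Fin N → ℝ) (hu : A *ᵥ u = 0) (x : Fin N → ℝ) : u ⬝ᵥ Ad *ᵥ x = 0 := by
  conv_lhs => rw [← h.2.1]
  rw [← mulVec_mulVec, my_dot_symm (Ad * A) h.2.2.2, ← mulVec_mulVec, hu]
  simp

/-- The abstract Woodbury-type identity. -/
lemma my_abstract (B Bdag M Mdag : Matrix (Fin N) (Fin N) ℝ) (ν u : Fin N → ℝ) (brs : ℝ)
    (hBsym : Bᵀ = B)
    (hB : IsMoorePenrose B Bdag) (hM : IsMoorePenrose M Mdag)
    (hMdef : M = B + brs • vecMulVec ν ν)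
    (hBu : B *ᵥ u = 0) (hνu : ν ⬝ᵥ u = 0)
    (hker : ∀ z, B *ᵥ z = 0 → u ⬝ᵥ z = 0 → z = 0)
    (hden : 1 + brs * (ν ⬝ᵥ Bdag *ᵥ ν) ≠ 0) :
    Mdag *ᵥ ν = (1 + brs * (ν ⬝ᵥ Bdag *ᵥ ν))⁻¹ • (Bdag *ᵥ ν) := by
  have huν : u ⬝ᵥ ν = 0 := by rw [dotProduct_comm]; exact hνu
  have hMν : ∀ x, M *ᵥ x = B *ᵥ x + (brs * (ν ⬝ᵥ x)) • ν := by
    intro x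
    rw [hMdef, add_mulVec, smul_mulVec, my_vecMulVec_mulVec, smul_smul]
  have hMu : M *ᵥ u = 0 := by
    rw [hMν, hBu, hνu]
    simp
  have hBBd : B * (1 - B * Bdag) = 0 := by
    have h1 : (1 - B * Bdag) * B = 0 := by
      rw [sub_mul, one_mul, hB.1, sub_self]
    calc B * (1 - B * Bdag) = Bᵀ * (1 - B * Bdag)ᵀ := by
          rw [hBsym, transpose_sub, transpose_one, hB.2.2.1]
      _ = ((1 - B * Bdag) * B)ᵀ := by rw [transpose_mul]
      _ = 0 := by rw [h1, transpose_zero]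
  have hBBB : B * B * Bdag = B := by
    have h2 := hBBd
    rw [Matrix.mul_sub, mul_one, sub_eq_zero, ← Matrix.mul_assoc] at h2
    exact h2.symm
  have hBBdν : B *ᵥ Bdag *ᵥ ν = ν := by
    have h3 : B *ᵥ (ν - B *ᵥ Bdag *ᵥ ν) = 0 := by
      rw [Matrix.mulVec_sub, mulVec_mulVec, mulVec_mulVec, hBBB, sub_self]
    have h4 : u ⬝ᵥ (ν - B *ᵥ Bdag *ᵥ ν) = 0 := by
      rw [dotProduct_sub, huν, my_dot_symm B hBsym, hBu, zero_dotProduct, sub_self]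
    exact (eq_of_sub_eq_zero (hker _ h3 h4)).symm
  have hBdBν : Bdag *ᵥ B *ᵥ ν = ν := by
    have h3 : B *ᵥ (ν - Bdag *ᵥ B *ᵥ ν) = 0 := by
      rw [Matrix.mulVec_sub, mulVec_mulVec, mulVec_mulVec, hB.1, sub_self]
    have h4 : u ⬝ᵥ (ν - Bdag *ᵥ B *ᵥ ν) = 0 := by
      rw [dotProduct_sub, huν, my_u_dot_dag B Bdag hB u hBu, sub_self]
    exact (eq_of_sub_eq_zero (hker _ h3 h4)).symm
  have hMker : ∀ z, M *ᵥ z = 0 → u ⬝ᵥ z = 0 → z = 0 := by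
    intro z h1 h2
    have hBz : B *ᵥ z = -((brs * (ν ⬝ᵥ z)) • ν) := by
      have h3 := (hMν z).symm.trans h1
      exact eq_neg_of_add_eq_zero_left h3
    have hνz : ν ⬝ᵥ z = 0 := by
      have e1 : ν ⬝ᵥ z = -(brs * (ν ⬝ᵥ z)) * (ν ⬝ᵥ Bdag *ᵥ ν) := by
        calc ν ⬝ᵥ z = ((Bdag * B) *ᵥ ν) ⬝ᵥ z := by rw [← mulVec_mulVec, hBdBν]
          _ = ν ⬝ᵥ ((Bdag * B) *ᵥ z) := (my_dot_symm _ hB.2.2.2 ν z).symm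
          _ = ν ⬝ᵥ (Bdag *ᵥ (B *ᵥ z)) := by rw [mulVec_mulVec]
          _ = ν ⬝ᵥ (Bdag *ᵥ (-((brs * (ν ⬝ᵥ z)) • ν))) := by rw [hBz]
          _ = -(brs * (ν ⬝ᵥ z)) * (ν ⬝ᵥ Bdag *ᵥ ν) := by
              rw [mulVec_neg, mulVec_smul, dotProduct_neg, dotProduct_smul]
              simp only [smul_eq_mul]
              ring
      have e2 : (ν ⬝ᵥ z) * (1 + brs * (ν ⬝ᵥ Bdag *ᵥ ν)) = 0 := by
        linear_combination e1
      rcases mul_eq_zero.mp e2 with h | h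
      · exact h
      · exact absurd h hden
    have hBz0 : B *ᵥ z = 0 := by
      rw [hBz, hνz]
      simp
    exact hker z hBz0 h2
  set c := 1 + brs * (ν ⬝ᵥ Bdag *ᵥ ν) with hc
  have hMy0 : M *ᵥ (Bdag *ᵥ ν) = c • ν := by
    rw [hMν, hBBdν, hc, add_smul, one_smul]
  have hMy : M *ᵥ (c⁻¹ • (Bdag *ᵥ ν)) = ν := by
    rw [mulVec_smul, hMy0, smul_smul, inv_mul_cancel₀ hden, one_smul]
  have hz : Mdag *ᵥ (M *ᵥ (c⁻¹ • (Bdag *ᵥ ν))) = c⁻¹ • (Bdag *ᵥ ν) := by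
    have h1 : M *ᵥ (c⁻¹ • (Bdag *ᵥ ν) - Mdag *ᵥ (M *ᵥ (c⁻¹ • (Bdag *ᵥ ν)))) = 0 := by
      rw [Matrix.mulVec_sub, mulVec_mulVec, mulVec_mulVec, hM.1, sub_self]
    have h2 : u ⬝ᵥ (c⁻¹ • (Bdag *ᵥ ν) - Mdag *ᵥ (M *ᵥ (c⁻¹ • (Bdag *ᵥ ν)))) = 0 := by
      rw [dotProduct_sub, dotProduct_smul, my_u_dot_dag B Bdag hB u hBu,
        my_u_dot_dag M Mdag hM u hMu, smul_zero, sub_self]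
    exact (eq_of_sub_eq_zero (hMker _ h1 h2)).symm
  calc Mdag *ᵥ ν = Mdag *ᵥ (M *ᵥ (c⁻¹ • (Bdag *ᵥ ν))) := by rw [hMy]
    _ = c⁻¹ • (Bdag *ᵥ ν) := hz

end Aux

theorem woodbury_dipole_identity {N : ℕ} (w : Fin N → Fin N → ℝ)
    (hw : IsWeight w) (hconn : (wGraph w).Connected)
    (r s : Fin N) (brs : ℝ)
    (Bdag Mdag : Matrix (Fin N) (Fin N) ℝ)
    (hB : IsMoorePenrose (lapMat w) Bdag)
    (hM : IsMoorePenrose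
      (lapMat w + brs • Matrix.vecMulVec (dipole r s) (dipole r s)) Mdag)
    (hden : 1 + brs * (dipole r s ⬝ᵥ Bdag.mulVec (dipole r s)) ≠ 0) :
    Mdag.mulVec (dipole r s) =
      (1 + brs * (dipole r s ⬝ᵥ Bdag.mulVec (dipole r s)))⁻¹ •
        Bdag.mulVec (dipole r s) := by
  have hN : 0 < N := by
    obtain ⟨i⟩ := hconn.nonempty
    exact i.pos
  have hBu : lapMat w *ᵥ (fun _ => (1:ℝ)) = 0 := by
    funext i
    rw [my_lapMat_mulVec w hw]
    simp
  have hνu : dipole r s ⬝ᵥ (fun _ => (1:ℝ)) = 0 := by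
    simp [dipole, dotProduct, sub_mul, Finset.sum_sub_distrib]
  have hker : ∀ z, lapMat w *ᵥ z = 0 → (fun _ => (1:ℝ)) ⬝ᵥ z = 0 → z = 0 := by
    intro z h1 h2
    have hcst := my_lap_ker_const w hw hconn z h1
    funext i
    have hsum : ∑ j, z j = 0 := by simpa [dotProduct] using h2
    have h3 : ∑ _j : Fin N, z i = 0 := by
      rw [Finset.sum_congr rfl fun j _ => hcst i j]
      exact hsum
    rw [Finset.sum_const, Finset.card_univ, Fintype.card_fin, nsmul_eq_mul] at h3
    have hN' : (N : ℝ) ≠ 0 := Nat.cast_ne_zero.mpr hN.ne'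
    exact (mul_eq_zero.mp h3).resolve_left hN' 
  exact my_abstract (lapMat w) Bdag _ Mdag (dipole r s) (fun _ => (1:ℝ)) brs
    (my_lapMat_transpose w hw) hB hM rfl hBu hνu hker hden
end

section
/- The locality factor η(r,s) = b_rs ν_rs^T B^† ν_rs of an edge (r,s) in a connected weighted graph is bounded below by b_rs / λ_F(r,s), where λ_F(r,s) is the minimum cut capacity (equivalently, by max-flow-min-cut, the maximum feasible flow) between r and s. -/
open Matrix BigOperators
open RealInnerProductSpace

/-- The locality factor `η(r,s) = b_rs ν_rs^T B^† ν_rs`. -/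
def eta {N : ℕ} (w : Fin N → Fin N → ℝ) (Bdag : Matrix (Fin N) (Fin N) ℝ)
    (r s : Fin N) : ℝ :=
  w r s * (dipole r s ⬝ᵥ Bdag.mulVec (dipole r s))

/-- The capacity of the cut determined by a vertex set `S`. -/
def cutCap {N : ℕ} (w : Fin N → Fin N → ℝ) (S : Finset (Fin N)) : ℝ :=
  ∑ i ∈ S, ∑ j ∈ Sᶜ, w i j

/-- The minimum cut capacity separating `r` from `s`. -/
noncomputable def lambdaF {N : ℕ} (w : Fin N → Fin N → ℝ) (r s : Fin N) : ℝ :=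
  sInf {c : ℝ | ∃ S : Finset (Fin N), r ∈ S ∧ s ∉ S ∧ c = cutCap w S}

-- aux lemmas
lemma lap_mulVec {N : ℕ} {w : Fin N → Fin N → ℝ} (hw : IsWeight w)
    (x : Fin N → ℝ) (i : Fin N) :
    (lapMat w).mulVec x i = ∑ j, w i j * (x i - x j) := by
  simp only [lapMat, Matrix.mulVec, dotProduct]
  have key : ∀ j, (if i = j then (∑ k, w i k) else -w i j) * x j
      = (if i = j then ((∑ k, w i k) + w i j) * x j else 0) - w i j * x j := by
    intro j
    by_cases h : i = j
    · subst h; simp [hw.2.2 i]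
    · simp [h]
  simp only [key, Finset.sum_sub_distrib, Finset.sum_ite_eq, Finset.mem_univ, if_true]
  have h2 : ∑ j, w i j * (x i - x j) = (∑ j, w i j) * x i - ∑ j, w i j * x j := by
    simp [mul_sub, Finset.sum_sub_distrib, Finset.sum_mul]
  rw [h2, hw.2.2 i, add_zero]

lemma quad_form {N : ℕ} {w : Fin N → Fin N → ℝ} (hw : IsWeight w)
    (x : Fin N → ℝ) :
    2 * (x ⬝ᵥ (lapMat w).mulVec x) = ∑ i, ∑ j, w i j * (x i - x j)^2 := by
  have h1 : x ⬝ᵥ (lapMat w).mulVec x = ∑ i, ∑ j, w i j * (x i * (x i - x j)) := by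
    simp only [dotProduct, lap_mulVec hw, Finset.mul_sum]
    congr 1; ext i; congr 1; ext j; ring
  have h2 : x ⬝ᵥ (lapMat w).mulVec x = ∑ i, ∑ j, w i j * (x j * (x j - x i)) := by
    rw [h1, Finset.sum_comm]
    refine Finset.sum_congr rfl fun i _ => Finset.sum_congr rfl fun j _ => ?_
    rw [hw.1 j i]
  calc 2 * (x ⬝ᵥ (lapMat w).mulVec x)
      = (∑ i, ∑ j, w i j * (x i * (x i - x j))) + ∑ i, ∑ j, w i j * (x j * (x j - x i)) := by
        rw [← h1, ← h2]; ring
    _ = ∑ i, ∑ j, w i j * (x i - x j)^2 := by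
        rw [← Finset.sum_add_distrib]
        refine Finset.sum_congr rfl fun i _ => ?_
        rw [← Finset.sum_add_distrib]
        refine Finset.sum_congr rfl fun j _ => ?_
        ring

lemma ker_edge_eq {N : ℕ} {w : Fin N → Fin N → ℝ} (hw : IsWeight w)
    {x : Fin N → ℝ} (hx : (lapMat w).mulVec x = 0) :
    ∀ i j, w i j ≠ 0 → x i = x j := by
  intro i j hij
  have h0 : x ⬝ᵥ (lapMat w).mulVec x = 0 := by rw [hx]; simp
  have h1 : ∑ i, ∑ j, w i j * (x i - x j)^2 = 0 := by
    rw [← quad_form hw, h0]; ring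
  have hnn : ∀ i ∈ Finset.univ, (0:ℝ) ≤ ∑ j, w i j * (x i - x j)^2 := by
    intro i _
    exact Finset.sum_nonneg fun j _ => mul_nonneg (hw.2.1 i j) (sq_nonneg _)
  have h2 := (Finset.sum_eq_zero_iff_of_nonneg hnn).mp h1 i (Finset.mem_univ i)
  have h3 := (Finset.sum_eq_zero_iff_of_nonneg
    (fun j _ => mul_nonneg (hw.2.1 i j) (sq_nonneg _))).mp h2 j (Finset.mem_univ j)
  have := mul_eq_zero.mp h3
  rcases this with h | h
  · exact absurd h hij
  · have := pow_eq_zero_iff (n := 2) (by norm_num) |>.mp h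
    linarith [this]

lemma walk_eq {N : ℕ} {w : Fin N → Fin N → ℝ} (x : Fin N → ℝ)
    (h : ∀ i j, (wGraph w).Adj i j → x i = x j) {a b : Fin N}
    (p : (wGraph w).Walk a b) : x a = x b := by
  induction p with
  | nil => rfl
  | cons h' _ ih => exact (h _ _ h').trans ih

lemma cut_flow {N : ℕ} {w : Fin N → Fin N → ℝ} (hw : IsWeight w)
    (x : Fin N → ℝ) (S : Finset (Fin N)) :
    ∑ i ∈ S, (lapMat w).mulVec x i = ∑ i ∈ S, ∑ j ∈ Sᶜ, w i j * (x i - x j) := by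
  have hsplit : ∑ i ∈ S, (lapMat w).mulVec x i
      = (∑ i ∈ S, ∑ j ∈ S, w i j * (x i - x j))
        + ∑ i ∈ S, ∑ j ∈ Sᶜ, w i j * (x i - x j) := by
    rw [← Finset.sum_add_distrib]
    refine Finset.sum_congr rfl fun i _ => ?_
    rw [lap_mulVec hw, ← Finset.sum_add_sum_compl S]
  have hzero : ∑ i ∈ S, ∑ j ∈ S, w i j * (x i - x j) = 0 := by
    have hcomm : ∑ i ∈ S, ∑ j ∈ S, w i j * (x i - x j)
        = ∑ i ∈ S, ∑ j ∈ S, w j i * (x j - x i) := Finset.sum_comm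
    have hneg : ∑ i ∈ S, ∑ j ∈ S, w j i * (x j - x i)
        = -∑ i ∈ S, ∑ j ∈ S, w i j * (x i - x j) := by
      rw [← Finset.sum_neg_distrib]
      refine Finset.sum_congr rfl fun i _ => ?_
      rw [← Finset.sum_neg_distrib]
      refine Finset.sum_congr rfl fun j _ => ?_
      rw [hw.1 j i]; ring
    linarith [hcomm, hneg]
  rw [hsplit, hzero, zero_add]

lemma dipole_mem_range {N : ℕ} {w : Fin N → Fin N → ℝ} (hw : IsWeight w)
    (hconn : (wGraph w).Connected) (r s : Fin N) :
    ∃ u : Fin N → ℝ, (lapMat w).mulVec u = dipole r s := by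
  classical
  have hherm : (lapMat w).IsHermitian := by
    rw [Matrix.IsHermitian]
    ext i j
    simp only [Matrix.conjTranspose_apply, star_trivial, lapMat]
    by_cases h : i = j
    · subst h; simp
    · simp only [h, Ne.symm h, if_false, neg_inj]
      exact hw.1 j i
  set T := Matrix.toEuclideanLin (lapMat w) with hT
  have hTsym : T.IsSymmetric := Matrix.isHermitian_iff_isSymmetric.mp hherm
  have hkerconst : ∀ x : EuclideanSpace ℝ (Fin N), x ∈ LinearMap.ker T → x r = x s := by
    intro x hx
    have hmv : (lapMat w).mulVec x = 0 := by
      have h := congrArg WithLp.ofLp (LinearMap.mem_ker.mp hx)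
      simpa [hT, Matrix.toEuclideanLin_apply] using h
    have hedge := ker_edge_eq hw hmv
    have hadj : ∀ i j, (wGraph w).Adj i j → x i = x j := by
      intro i j hij
      rcases (show i ≠ j ∧ (w i j ≠ 0 ∨ w j i ≠ 0) from hij) with ⟨_, h | h⟩
      · exact hedge i j h
      · exact (hedge j i h).symm
    obtain ⟨p⟩ := hconn.preconnected r s
    exact walk_eq x hadj p
  have h1 : (LinearMap.range T)ᗮ ≤ LinearMap.ker T := by
    intro y hy
    rw [LinearMap.mem_ker]
    have hall : ∀ x, ⟪x, T y⟫ = 0 := by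
      intro x
      rw [← hTsym x y]
      exact (Submodule.mem_orthogonal _ _).mp hy (T x) ⟨x, rfl⟩
    exact inner_self_eq_zero.mp (hall (T y))
  have h2 : (LinearMap.ker T)ᗮ ≤ LinearMap.range T := by
    have h3 := Submodule.orthogonal_le h1
    rwa [Submodule.orthogonal_orthogonal] at h3
  have hmem : (WithLp.equiv 2 (Fin N → ℝ)).symm (dipole r s) ∈ (LinearMap.ker T)ᗮ := by
    rw [Submodule.mem_orthogonal]
    intro x hx
    have hx' := hkerconst x hx
    have hinner : ⟪x, (WithLp.equiv 2 (Fin N → ℝ)).symm (dipole r s)⟫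
        = x r - x s := by
      simp only [PiLp.inner_apply, RCLike.inner_apply, starRingEnd_apply, star_trivial]
      simp [dipole, sub_mul, ite_mul, Finset.sum_sub_distrib]
    rw [hinner, hx', sub_self]
  obtain ⟨u, hu⟩ := h2 hmem
  exact ⟨u, by have h := congrArg WithLp.ofLp hu; exact h⟩

theorem locality_factor_min_cut_bound {N : ℕ} (w : Fin N → Fin N → ℝ)
    (hw : IsWeight w) (hconn : (wGraph w).Connected)
    (r s : Fin N) (hedge : 0 < w r s)
    (Bdag : Matrix (Fin N) (Fin N) ℝ)
    (hB : IsMoorePenrose (lapMat w) Bdag) :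
    w r s / lambdaF w r s ≤ eta w Bdag r s := by
  classical
  have hrs : r ≠ s := by
    rintro rfl
    rw [hw.2.2 r] at hedge
    exact lt_irrefl 0 hedge
  set ν : Fin N → ℝ := dipole r s with hν
  set φ : Fin N → ℝ := Bdag.mulVec ν with hφ
  set E : ℝ := ν ⬝ᵥ φ with hE
  -- Bφ = ν
  obtain ⟨u, hu⟩ := dipole_mem_range hw hconn r s
  have hBφ : (lapMat w).mulVec φ = ν := by
    rw [hφ, hν, ← hu, Matrix.mulVec_mulVec, Matrix.mulVec_mulVec, hB.1]
  -- E = φᵀ B φ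
  have hEφ : E = φ ⬝ᵥ (lapMat w).mulVec φ := by
    rw [hE, ← hBφ, dotProduct_comm]
  -- key bound: every admissible cut c satisfies 1 ≤ c * E
  have key : ∀ c ∈ {c : ℝ | ∃ S : Finset (Fin N), r ∈ S ∧ s ∉ S ∧ c = cutCap w S},
      1 ≤ c * E := by
    rintro c ⟨S, hrS, hsS, rfl⟩
    -- flow across cut is 1
    have hsum : ∑ i ∈ S, ν i = 1 := by
      simp [hν, dipole, Finset.sum_sub_distrib, Finset.sum_ite_eq' S, hrS, hsS]
    have hflow : ∑ i ∈ S, ∑ j ∈ Sᶜ, w i j * (φ i - φ j) = 1 := by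
      rw [← cut_flow hw φ S, hBφ, hsum]
    -- Cauchy-Schwarz on S ×ˢ Sᶜ
    set P : Finset (Fin N × Fin N) := S ×ˢ Sᶜ with hP
    have hflow' : ∑ p ∈ P, w p.1 p.2 * (φ p.1 - φ p.2) = 1 := by
      rw [hP, Finset.sum_product]; exact hflow
    have hcut : cutCap w S = ∑ p ∈ P, w p.1 p.2 := by
      rw [hP, Finset.sum_product]; rfl
    have hCS : (∑ p ∈ P, w p.1 p.2 * (φ p.1 - φ p.2))^2
        ≤ (∑ p ∈ P, w p.1 p.2) * ∑ p ∈ P, w p.1 p.2 * (φ p.1 - φ p.2)^2 := by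
      have h := Finset.sum_mul_sq_le_sq_mul_sq P
        (fun p => Real.sqrt (w p.1 p.2))
        (fun p => Real.sqrt (w p.1 p.2) * (φ p.1 - φ p.2))
      have e1 : ∀ p ∈ P, Real.sqrt (w p.1 p.2) * (Real.sqrt (w p.1 p.2) * (φ p.1 - φ p.2))
          = w p.1 p.2 * (φ p.1 - φ p.2) := by
        intro p _
        rw [← mul_assoc, Real.mul_self_sqrt (hw.2.1 _ _)]
      have e2 : ∀ p ∈ P, Real.sqrt (w p.1 p.2) ^ 2 = w p.1 p.2 := by
        intro p _
        rw [Real.sq_sqrt (hw.2.1 _ _)]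
      have e3 : ∀ p ∈ P, (Real.sqrt (w p.1 p.2) * (φ p.1 - φ p.2))^2
          = w p.1 p.2 * (φ p.1 - φ p.2)^2 := by
        intro p _
        rw [mul_pow, Real.sq_sqrt (hw.2.1 _ _)]
      rw [Finset.sum_congr rfl e1, Finset.sum_congr rfl e2, Finset.sum_congr rfl e3] at h
      exact h
    -- cut energy ≤ E
    have henergy : ∑ p ∈ P, w p.1 p.2 * (φ p.1 - φ p.2)^2 ≤ E := by
      have h2E : 2 * E = ∑ i, ∑ j, w i j * (φ i - φ j)^2 := by
        rw [hEφ]; exact quad_form hw φ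
      have hA : ∑ p ∈ P, w p.1 p.2 * (φ p.1 - φ p.2)^2
          = ∑ i ∈ S, ∑ j ∈ Sᶜ, w i j * (φ i - φ j)^2 := by
        rw [hP, Finset.sum_product]
      have hsym : ∑ i ∈ Sᶜ, ∑ j ∈ S, w i j * (φ i - φ j)^2
          = ∑ i ∈ S, ∑ j ∈ Sᶜ, w i j * (φ i - φ j)^2 := by
        rw [Finset.sum_comm]
        refine Finset.sum_congr rfl fun i _ => Finset.sum_congr rfl fun j _ => ?_
        rw [hw.1 j i]
        ring_nf
      have hsplit : ∑ i, ∑ j, w i j * (φ i - φ j)^2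
          = (∑ i ∈ S, ∑ j, w i j * (φ i - φ j)^2)
            + ∑ i ∈ Sᶜ, ∑ j, w i j * (φ i - φ j)^2 :=
        (Finset.sum_add_sum_compl S _).symm
      have hge1 : ∑ i ∈ S, ∑ j ∈ Sᶜ, w i j * (φ i - φ j)^2
          ≤ ∑ i ∈ S, ∑ j, w i j * (φ i - φ j)^2 := by
        refine Finset.sum_le_sum fun i _ => ?_
        refine Finset.sum_le_sum_of_subset_of_nonneg (Finset.subset_univ _) ?_
        intro j _ _
        exact mul_nonneg (hw.2.1 _ _) (sq_nonneg _)
      have hge2 : ∑ i ∈ Sᶜ, ∑ j ∈ S, w i j * (φ i - φ j)^2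
          ≤ ∑ i ∈ Sᶜ, ∑ j, w i j * (φ i - φ j)^2 := by
        refine Finset.sum_le_sum fun i _ => ?_
        refine Finset.sum_le_sum_of_subset_of_nonneg (Finset.subset_univ _) ?_
        intro j _ _
        exact mul_nonneg (hw.2.1 _ _) (sq_nonneg _)
      nlinarith [hA, hsym, hsplit, h2E, hge1, hge2]
    have hcutnn : 0 ≤ ∑ p ∈ P, w p.1 p.2 :=
      Finset.sum_nonneg fun p _ => hw.2.1 _ _
    calc (1:ℝ) = (∑ p ∈ P, w p.1 p.2 * (φ p.1 - φ p.2))^2 := by rw [hflow']; norm_num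
      _ ≤ (∑ p ∈ P, w p.1 p.2) * ∑ p ∈ P, w p.1 p.2 * (φ p.1 - φ p.2)^2 := hCS
      _ ≤ (∑ p ∈ P, w p.1 p.2) * E := mul_le_mul_of_nonneg_left henergy hcutnn
      _ = cutCap w S * E := by rw [hcut]
  -- the cut set is nonempty
  have hne : ({c : ℝ | ∃ S : Finset (Fin N), r ∈ S ∧ s ∉ S ∧ c = cutCap w S}).Nonempty :=
    ⟨cutCap w {r}, {r}, Finset.mem_singleton_self r, by simp [Ne.symm hrs, hrs], rfl⟩
  -- E > 0
  have hEpos : 0 < E := by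
    obtain ⟨c, hc⟩ := hne
    have h1 := key c hc
    by_contra h
    push_neg at h
    obtain ⟨S, _, _, rfl⟩ := hc
    have hcnn : 0 ≤ cutCap w S :=
      Finset.sum_nonneg fun i _ => Finset.sum_nonneg fun j _ => hw.2.1 _ _
    nlinarith
  -- lambdaF ≥ 1/E
  have hlam : 1 / E ≤ lambdaF w r s := by
    refine le_csInf hne fun c hc => ?_
    rw [div_le_iff₀ hEpos]
    exact key c hc
  have hlampos : 0 < lambdaF w r s := lt_of_lt_of_le (by positivity) hlam
  -- conclude
  rw [eta, ← hν, ← hφ, ← hE]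
  rw [div_le_iff₀ hlampos]
  have h1 : w r s * E * (1 / E) ≤ w r s * E * lambdaF w r s :=
    mul_le_mul_of_nonneg_left hlam (by positivity)
  have h2 : w r s * E * (1 / E) = w r s := by
    field_simp
  linarith
end

section
/- Let (r,s) be an edge of a connected weighted graph such that the graph with edge (r,s) removed is still connected, and let dist_1^w(r,s) be the weighted shortest-path distance from r to s in the graph with edge (r,s) removed, using edge weights 1/b_e. Then the locality factor satisfies η(r,s) ≤ (1 + 1/(b_rs · dist_1^w(r,s)))^{-1}. -/
open Matrix BigOperators

/-- The weights after removal of the edge `(r,s)`. -/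
def removeEdge {N : ℕ} (w : Fin N → Fin N → ℝ) (r s : Fin N) :
    Fin N → Fin N → ℝ :=
  fun i j => if (i = r ∧ j = s) ∨ (i = s ∧ j = r) then 0 else w i j

/-- The length of a walk where each edge `(i,j)` has length `1 / w i j`. -/
noncomputable def walkInvLength {N : ℕ} (w : Fin N → Fin N → ℝ) {G : SimpleGraph (Fin N)}
    {a b : Fin N} (p : G.Walk a b) : ℝ :=
  (p.darts.map (fun d => 1 / w d.fst d.snd)).sum

/-- Weighted shortest-path distance from `r` to `s` with edge lengths `1 / w`. -/
noncomputable def wDist {N : ℕ} (w : Fin N → Fin N → ℝ) (r s : Fin N) : ℝ :=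
  sInf {L : ℝ | ∃ p : (wGraph w).Walk r s, p.IsPath ∧ L = walkInvLength w p}

/- ------------------ auxiliary lemmas ------------------ -/

lemma mp_unique {N : ℕ} (A X Y : Matrix (Fin N) (Fin N) ℝ)
    (hX : IsMoorePenrose A X) (hY : IsMoorePenrose A Y) : X = Y := by
  obtain ⟨hX1, hX2, hX3, hX4⟩ := hX
  obtain ⟨hY1, hY2, hY3, hY4⟩ := hY
  have hAX : A * X = A * Y := by
    calc A * X = (A * X)ᵀ := hX3.symm
    _ = Xᵀ * Aᵀ := by rw [transpose_mul]
    _ = Xᵀ * (A * Y * A)ᵀ := by rw [hY1]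
    _ = Xᵀ * (Aᵀ * (A * Y)ᵀ) := by rw [transpose_mul]
    _ = (Xᵀ * Aᵀ) * (A * Y) := by rw [hY3, Matrix.mul_assoc]
    _ = (A * X)ᵀ * (A * Y) := by rw [transpose_mul]
    _ = (A * X) * (A * Y) := by rw [hX3]
    _ = (A * X * A) * Y := by simp only [Matrix.mul_assoc]
    _ = A * Y := by rw [hX1]
  have hXA : X * A = Y * A := by
    calc X * A = (X * A)ᵀ := hX4.symm
    _ = Aᵀ * Xᵀ := by rw [transpose_mul]
    _ = (A * (Y * A))ᵀ * Xᵀ := by rw [← Matrix.mul_assoc, hY1]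
    _ = ((Y * A)ᵀ * Aᵀ) * Xᵀ := by rw [transpose_mul]
    _ = (Y * A) * (Aᵀ * Xᵀ) := by rw [hY4, Matrix.mul_assoc]
    _ = (Y * A) * (X * A)ᵀ := by rw [transpose_mul]
    _ = Y * (A * X * A) := by rw [hX4]; simp only [Matrix.mul_assoc]
    _ = Y * A := by rw [hX1]
  calc X = X * A * X := hX2.symm
  _ = Y * (A * X) := by rw [hXA, Matrix.mul_assoc]
  _ = Y * (A * Y) := by rw [hAX]
  _ = Y := by rw [← Matrix.mul_assoc, hY2]

lemma lap_entry {N : ℕ} (w : Fin N → Fin N → ℝ) (hdiag : ∀ i, w i i = 0) (i j : Fin N) :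
    lapMat w i j = (if i = j then ∑ k, w i k else 0) - w i j := by
  by_cases h : i = j
  · subst h; simp [lapMat, hdiag]
  · simp [lapMat, h]

lemma quad {N : ℕ} (w : Fin N → Fin N → ℝ) (hsym : ∀ i j, w i j = w j i)
    (hdiag : ∀ i, w i i = 0) (x : Fin N → ℝ) :
    2 * (x ⬝ᵥ ((lapMat w) *ᵥ x)) = ∑ i, ∑ j, w i j * (x i - x j)^2 := by
  have inner : ∀ i, ((lapMat w) *ᵥ x) i
      = (∑ k, w i k) * x i - ∑ j, w i j * x j := by
    intro i
    show (∑ j, lapMat w i j * x j) = _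
    have e : ∀ j, lapMat w i j * x j
        = (if i = j then (∑ k, w i k) * x j else 0) - w i j * x j := by
      intro j; rw [lap_entry w hdiag]; by_cases h : i = j <;> simp [h, sub_mul]
    rw [Finset.sum_congr rfl (fun j _ => e j), Finset.sum_sub_distrib,
      Finset.sum_ite_eq]
    simp
  have key : x ⬝ᵥ ((lapMat w) *ᵥ x)
      = (∑ i, ∑ j, w i j * (x i * x i)) - ∑ i, ∑ j, w i j * (x i * x j) := by
    show (∑ i, x i * ((lapMat w) *ᵥ x) i) = _
    rw [← Finset.sum_sub_distrib]
    refine Finset.sum_congr rfl (fun i _ => ?_)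
    rw [inner i, mul_sub, Finset.mul_sum, mul_comm, Finset.sum_mul, Finset.sum_mul]
    congr 1 <;> exact Finset.sum_congr rfl (fun j _ => by ring)
  have comm : ∑ i, ∑ j, w i j * (x j * x j) = ∑ i, ∑ j, w i j * (x i * x i) := by
    rw [Finset.sum_comm]
    exact Finset.sum_congr rfl fun i _ => Finset.sum_congr rfl fun j _ => by rw [hsym]
  have expand : ∑ i, ∑ j, w i j * (x i - x j)^2
      = (∑ i, ∑ j, w i j * (x i * x i)) - 2 * (∑ i, ∑ j, w i j * (x i * x j))
        + ∑ i, ∑ j, w i j * (x j * x j) := by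
    simp only [← Finset.sum_sub_distrib, ← Finset.sum_add_distrib, Finset.mul_sum]
    exact Finset.sum_congr rfl fun i _ => Finset.sum_congr rfl fun j _ => by ring
  rw [key, expand, comm]; ring

lemma telescope {N : ℕ} {G : SimpleGraph (Fin N)} (x : Fin N → ℝ) :
    ∀ {a b : Fin N} (p : G.Walk a b),
      (p.darts.map (fun d => x d.fst - x d.snd)).sum = x a - x b := by
  intro a b p
  induction p with
  | nil => simp
  | cons h q ih => simp only [SimpleGraph.Walk.darts_cons, List.map_cons, List.sum_cons, ih]; ring

lemma two_cs (b u T S1 S2 : ℝ) (hb : 0 < b) (hS1 : 0 ≤ S1) (hS2 : 0 ≤ S2)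
    (hG : T^2 ≤ S1 * S2) :
    (u + T)^2 ≤ (1/b + S1) * (b * u^2 + S2) := by
  rcases eq_or_lt_of_le hS1 with h0 | hS1p
  · have hT : T = 0 := by nlinarith
    rw [hT, ← h0]
    have : (u + 0)^2 = (1/b) * (b * u^2) := by field_simp; ring
    nlinarith [div_nonneg (le_of_lt (one_pos)) (le_of_lt hb)]
  · have hR : 0 ≤ S2 + S1 * b^2 * u^2 - 2 * b * u * T := by
      have h2 : 0 ≤ S1 * (S2 + S1 * b^2 * u^2 - 2 * b * u * T) := by
        nlinarith [sq_nonneg (b * u * S1 - T)]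
      nlinarith
    have hexp : (1/b + S1) * (b * u^2 + S2) = u^2 + S2/b + S1*b*u^2 + S1*S2 := by
      field_simp; ring
    have hR' : 0 ≤ S2/b + S1*b*u^2 - 2*u*T := by
      have h3 := div_nonneg hR hb.le
      have h4 : (S2 + S1 * b^2 * u^2 - 2 * b * u * T)/b = S2/b + S1*b*u^2 - 2*u*T := by
        field_simp
      rwa [h4] at h3
    rw [hexp]; nlinarith

lemma list_cs {ι : Type*} (b t : ι → ℝ) :
    ∀ (l : List ι), (∀ i ∈ l, 0 < b i) →
      ((l.map t).sum)^2 ≤ (l.map (fun i => 1 / b i)).sum * (l.map (fun i => b i * (t i)^2)).sum := by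
  intro l
  induction l with
  | nil => simp
  | cons a l ih =>
    intro hpos
    have hb : 0 < b a := hpos a List.mem_cons_self
    have ih' := ih (fun i hi => hpos i (List.mem_cons_of_mem a hi))
    have hS1n : 0 ≤ (l.map (fun i => 1 / b i)).sum := by
      apply List.sum_nonneg; intro y hy
      obtain ⟨i, hi, rfl⟩ := List.mem_map.mp hy
      exact le_of_lt (div_pos one_pos (hpos i (List.mem_cons_of_mem a hi)))
    have hS2n : 0 ≤ (l.map (fun i => b i * (t i)^2)).sum := by
      apply List.sum_nonneg; intro y hy
      obtain ⟨i, hi, rfl⟩ := List.mem_map.mp hy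
      exact mul_nonneg (le_of_lt (hpos i (List.mem_cons_of_mem a hi))) (sq_nonneg _)
    simp only [List.map_cons, List.sum_cons]
    exact two_cs (b a) (t a) _ _ _ hb hS1n hS2n ih'

theorem locality_factor_upper_bound {N : ℕ} (w : Fin N → Fin N → ℝ)
    (hw : IsWeight w) (hconn : (wGraph w).Connected)
    (r s : Fin N) (hedge : 0 < w r s)
    (hconn' : (wGraph (removeEdge w r s)).Connected)
    (Bdag : Matrix (Fin N) (Fin N) ℝ)
    (hB : IsMoorePenrose (lapMat w) Bdag) :
    eta w Bdag r s ≤ (1 + 1 / (w r s * wDist (removeEdge w r s) r s))⁻¹ := by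
  classical
  obtain ⟨hsym, hnn, hdiag⟩ := hw
  set B := lapMat w with hBdef
  set w' := removeEdge w r s with hw'def
  set G' := wGraph w' with hG'def
  have hrs : r ≠ s := by
    intro h; rw [h, hdiag] at hedge; exact lt_irrefl 0 hedge
  -- symmetry of B
  have hBsym : Bᵀ = B := by
    ext i j
    by_cases h : i = j
    · subst h; rfl
    · simp [hBdef, lapMat, Matrix.transpose_apply, h, Ne.symm h, hsym i j]
  -- symmetry of Bdag
  have hds : Bdagᵀ = Bdag := by
    have hT : IsMoorePenrose B Bdagᵀ := by
      obtain ⟨h1, h2, h3, h4⟩ := hB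
      refine ⟨?_, ?_, ?_, ?_⟩
      · have := congrArg Matrix.transpose h1
        simp only [transpose_mul, hBsym] at this
        simpa [Matrix.mul_assoc] using this
      · have := congrArg Matrix.transpose h2
        simp only [transpose_mul, hBsym] at this
        simpa [Matrix.mul_assoc] using this
      · calc (B * Bdagᵀ)ᵀ = Bdag * Bᵀ := by rw [transpose_mul, transpose_transpose]
        _ = Bdag * B := by rw [hBsym]
        _ = (Bdag * B)ᵀ := h4.symm
        _ = Bᵀ * Bdagᵀ := by rw [transpose_mul]
        _ = B * Bdagᵀ := by rw [hBsym]
      · calc (Bdagᵀ * B)ᵀ = Bᵀ * Bdag := by rw [transpose_mul, transpose_transpose]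
        _ = B * Bdag := by rw [hBsym]
        _ = (B * Bdag)ᵀ := h3.symm
        _ = Bdagᵀ * Bᵀ := by rw [transpose_mul]
        _ = Bdagᵀ * B := by rw [hBsym]
    exact (mp_unique B Bdag Bdagᵀ hB hT).symm
  set ν := dipole r s with hν
  set x := Bdag *ᵥ ν with hx
  set Δ := ν ⬝ᵥ x with hΔdef
  have heta : eta w Bdag r s = w r s * Δ := rfl
  -- Δ = x r - x s
  have hΔrs : Δ = x r - x s := by
    simp only [hΔdef, dotProduct, hν, dipole, sub_mul, ite_mul, one_mul, zero_mul,
      Finset.sum_sub_distrib, Finset.sum_ite_eq', Finset.mem_univ, if_true]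
  -- x ⬝ᵥ B x = Δ
  have hQ : x ⬝ᵥ (B *ᵥ x) = Δ := by
    show (Bdag *ᵥ ν) ⬝ᵥ (B *ᵥ x) = Δ
    calc (Bdag *ᵥ ν) ⬝ᵥ (B *ᵥ x)
        = (ν ᵥ* Bdagᵀ) ⬝ᵥ (B *ᵥ x) := by rw [Matrix.vecMul_transpose]
      _ = ν ⬝ᵥ (Bdagᵀ *ᵥ (B *ᵥ x)) := (Matrix.dotProduct_mulVec ν Bdagᵀ (B *ᵥ x)).symm
      _ = ν ⬝ᵥ ((Bdagᵀ * B * Bdag) *ᵥ ν) := by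
          rw [hx]
          simp only [Matrix.mulVec_mulVec, Matrix.mul_assoc]
      _ = ν ⬝ᵥ (Bdag *ᵥ ν) := by rw [hds, hB.2.1]
      _ = Δ := rfl
  -- weights of the reduced graph
  have hsym' : ∀ i j, w' i j = w' j i := by
    intro i j
    by_cases h : (i = r ∧ j = s) ∨ (i = s ∧ j = r)
    · have h' : (j = r ∧ i = s) ∨ (j = s ∧ i = r) := by tauto
      simp [hw'def, removeEdge, h, h']
    · have h' : ¬ ((j = r ∧ i = s) ∨ (j = s ∧ i = r)) := by tauto
      simp [hw'def, removeEdge, h, h', hsym i j]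
  have hnn' : ∀ i j, 0 ≤ w' i j := by
    intro i j
    by_cases h : (i = r ∧ j = s) ∨ (i = s ∧ j = r) <;> simp [hw'def, removeEdge, h, hnn i j]
  have hadj_pos : ∀ i j, G'.Adj i j → 0 < w' i j := by
    intro i j hij
    obtain ⟨hne, hv⟩ : i ≠ j ∧ (w' i j ≠ 0 ∨ w' j i ≠ 0) := hij
    have : w' i j ≠ 0 := by
      rcases hv with h | h
      · exact h
      · rw [hsym' i j]; exact h
    exact lt_of_le_of_ne (hnn' i j) (Ne.symm this)
  have hnot_rs : ∀ i j, G'.Adj i j → ¬ ((i = r ∧ j = s) ∨ (i = s ∧ j = r)) := by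
    intro i j hij hcon
    have := hadj_pos i j hij
    rw [hw'def] at this
    simp only [removeEdge, hcon, if_true] at this
    exact lt_irrefl 0 this
  have hw'w : ∀ i j, G'.Adj i j → w' i j = w i j := by
    intro i j hij
    have h := hnot_rs i j hij
    simp [hw'def, removeEdge, h]
  -- pick a minimizing path
  haveI : DecidableRel G'.Adj := Classical.decRel _
  set S : Set ℝ := {L : ℝ | ∃ p : G'.Walk r s, p.IsPath ∧ L = walkInvLength w' p} with hS
  have hSfin : S.Finite := by
    have : S ⊆ Set.range (fun q : G'.Path r s => walkInvLength w' q.1) := by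
      rintro L ⟨p, hp, rfl⟩
      exact ⟨⟨p, hp⟩, rfl⟩
    exact (Set.finite_range _).subset this
  have hSne : S.Nonempty := by
    obtain ⟨p0⟩ := hconn'.preconnected r s
    exact ⟨walkInvLength w' p0.toPath.1, p0.toPath.1, p0.toPath.2, rfl⟩
  have hmem : sInf S ∈ S := hSne.csInf_mem hSfin
  obtain ⟨p, hp, hpL⟩ := hmem
  have hwd : wDist w' r s = walkInvLength w' p := hpL
  set L := walkInvLength w' p with hL
  -- positivity of dart weights
  have hdart : ∀ d ∈ p.darts, 0 < w' d.fst d.snd := fun d _ => hadj_pos _ _ d.adj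
  -- Cauchy-Schwarz along the path
  set E2 : ℝ := (p.darts.map (fun d => w' d.fst d.snd * (x d.fst - x d.snd)^2)).sum with hE2
  have hCS : Δ^2 ≤ L * E2 := by
    have := list_cs (fun d : G'.Dart => w' d.fst d.snd)
      (fun d : G'.Dart => x d.fst - x d.snd) p.darts hdart
    rw [telescope x p, ← hΔrs] at this
    exact this
  have hE2nn : 0 ≤ E2 := by
    apply List.sum_nonneg; intro y hy
    obtain ⟨d, hd, rfl⟩ := List.mem_map.mp hy
    exact mul_nonneg (hnn' _ _) (sq_nonneg _)
  have hLnn : 0 ≤ L := by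
    rw [hL]; apply List.sum_nonneg; intro y hy
    obtain ⟨d, hd, rfl⟩ := List.mem_map.mp hy
    exact le_of_lt (div_pos one_pos (hdart d hd))
  -- energy bound : w r s * Δ^2 + E2 ≤ Δ
  have hEnergy : w r s * Δ^2 + E2 ≤ Δ := by
    -- the list of oriented edges
    set A : List (Fin N × Fin N) := (r, s) :: p.darts.map (fun d => (d.fst, d.snd)) with hA
    set F : Fin N × Fin N → ℝ := fun q => w q.1 q.2 * (x q.1 - x q.2)^2 with hF
    have hFnn : ∀ q : Fin N × Fin N, 0 ≤ F q := fun q => mul_nonneg (hnn _ _) (sq_nonneg _)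
    have hmapA : A.map (Function.uncurry Sym2.mk) = s(r, s) :: p.edges := by
      rw [hA, List.map_cons, SimpleGraph.Walk.edges, List.map_map]
      rfl
    have hrs_notmem : s(r, s) ∉ p.edges := by
      intro hmem
      have hadj := p.adj_of_mem_edges hmem
      exact hnot_rs r s hadj (Or.inl ⟨rfl, rfl⟩)
    have hAsym2 : (A.map (Function.uncurry Sym2.mk)).Nodup := by
      rw [hmapA]
      exact List.nodup_cons.mpr ⟨hrs_notmem, hp.edges_nodup⟩
    have hAnd : A.Nodup := hAsym2.of_map _
    have hAne : ∀ q ∈ A, q.1 ≠ q.2 := by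
      intro q hq
      rcases List.mem_cons.mp hq with h | h
      · subst h; exact hrs
      · obtain ⟨d, hd, rfl⟩ := List.mem_map.mp h
        exact d.adj.ne
    set AB : List (Fin N × Fin N) := A ++ A.map Prod.swap with hAB
    have hBsym2 : ((A.map Prod.swap).map (Function.uncurry Sym2.mk)).Nodup := by
      have : (A.map Prod.swap).map (Function.uncurry Sym2.mk) = A.map (Function.uncurry Sym2.mk) := by
        rw [List.map_map]
        exact List.map_congr_left (fun q _ => by
          show Function.uncurry Sym2.mk q.swap = Function.uncurry Sym2.mk q
          exact (Sym2.eq_swap (a := q.2) (b := q.1)))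
      rw [this]; exact hAsym2
    have hABnd : AB.Nodup := by
      rw [hAB, List.nodup_append]
      refine ⟨hAnd, hBsym2.of_map _, ?_⟩
      intro q hqA q2 hqB hqe
      subst hqe
      obtain ⟨q', hq', hq'eq⟩ := List.mem_map.mp hqB
      have hq'q : q' = q.swap := by
        rw [← hq'eq]; exact (Prod.swap_swap q').symm
      rw [hq'q] at hq'
      have hqq : q = q.swap :=
        List.inj_on_of_nodup_map hAsym2 hqA hq' (Sym2.eq_swap (a := q.1) (b := q.2))
      exact hAne q hqA (congrArg Prod.fst hqq)
    -- sum over AB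
    have hABsum : (AB.map F).sum = 2 * ((A.map F).sum) := by
      rw [hAB, List.map_append, List.sum_append]
      have : ((A.map Prod.swap).map F).sum = (A.map F).sum := by
        rw [List.map_map]
        congr 1
        exact List.map_congr_left (fun q _ => by
          show F q.swap = F q
          simp only [hF, Prod.fst_swap, Prod.snd_swap, hsym q.2 q.1]
          ring)
      rw [this]; ring
    have hAF : (A.map F).sum = w r s * Δ^2 + E2 := by
      rw [hA, List.map_cons, List.sum_cons, List.map_map]
      have e1 : F (r, s) = w r s * Δ^2 := by rw [hΔrs]
      have e2 : (p.darts.map (F ∘ fun d => (d.fst, d.snd))).sum = E2 := by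
        rw [hE2]
        congr 1
        refine List.map_congr_left (fun (d : G'.Dart) hd => ?_)
        show F (d.fst, d.snd) = w' d.fst d.snd * (x d.fst - x d.snd)^2
        simp only [hF]
        rw [hw'w _ _ d.adj]
      rw [e1, e2]
    have hsub : (AB.map F).sum ≤ ∑ i, ∑ j, w i j * (x i - x j)^2 := by
      rw [← List.sum_toFinset _ hABnd]
      have h1 : AB.toFinset.sum F ≤ ∑ q : Fin N × Fin N, F q :=
        Finset.sum_le_sum_of_subset_of_nonneg (Finset.subset_univ _)
          (fun q _ _ => hFnn q)
      calc AB.toFinset.sum F ≤ ∑ q : Fin N × Fin N, F q := h1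
      _ = ∑ i, ∑ j, w i j * (x i - x j)^2 := by rw [Fintype.sum_prod_type]
    have h2Q : 2 * (x ⬝ᵥ (B *ᵥ x)) = ∑ i, ∑ j, w i j * (x i - x j)^2 :=
      quad w hsym hdiag x
    rw [hABsum, hAF] at hsub
    rw [← h2Q, hQ] at hsub
    linarith
  -- final arithmetic
  rw [heta, hwd]
  rcases le_or_gt Δ 0 with hΔ | hΔ
  · have hlhs : w r s * Δ ≤ 0 := mul_nonpos_of_nonneg_of_nonpos hedge.le hΔ
    have hrhs : (0:ℝ) ≤ (1 + 1 / (w r s * L))⁻¹ := by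
      apply inv_nonneg.mpr
      have : 0 ≤ 1 / (w r s * L) := by positivity
      linarith
    linarith
  · have hLpos : 0 < L := by
      by_contra h
      push_neg at h
      have hL0 : L = 0 := le_antisymm h hLnn
      rw [hL0, zero_mul] at hCS
      nlinarith
    have hE2pos : 0 < E2 := by nlinarith [hCS, mul_pos hΔ hΔ, hLpos, hE2nn]
    have hkey : w r s * L * Δ + Δ ≤ L := by
      have h5 : (w r s * L * Δ + Δ) * Δ ≤ L * Δ := by
        nlinarith [hCS, mul_le_mul_of_nonneg_left hEnergy hLnn]
      exact le_of_mul_le_mul_right h5 hΔ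
    have hbL : 0 < w r s * L := mul_pos hedge hLpos
    have hRHS : (1 + 1 / (w r s * L))⁻¹ = (w r s * L) / (w r s * L + 1) := by
      rw [one_add_div (ne_of_gt hbL), inv_div]
      try rw [add_comm]
    rw [hRHS, le_div_iff₀ (by linarith)]
    nlinarith [mul_le_mul_of_nonneg_left hkey hedge.le]
end

section
/- Let ψ solve the discrete Poisson (dipole) equation B ψ = q where q has a nonnegative entry only at node r, a nonpositive entry only at node s, and zeros elsewhere. Define u_d as the maximum of ψ_n over nodes n at graph distance d from r. Then u_d ≤ u_{d-1} for all 1 ≤ d ≤ d_max, i.e., the maximum potential change decreases monotonically with distance from r. -/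
open Matrix BigOperators

theorem potential_max_decays_with_distance {N : ℕ} (w : Fin N → Fin N → ℝ)
    (hw : IsWeight w) (hconn : (wGraph w).Connected)
    (r s : Fin N) (q ψ : Fin N → ℝ)
    (hq : (lapMat w).mulVec ψ = q)
    (hqr : 0 ≤ q r) (hqs : q s ≤ 0) (hq0 : ∀ n, n ≠ r → n ≠ s → q n = 0)
    (u : ℕ → ℝ)
    (hu : ∀ d, u d = sSup {x : ℝ | ∃ n, (wGraph w).dist r n = d ∧ x = ψ n}) :
    ∀ d : ℕ, 1 ≤ d → (∃ n, (wGraph w).dist r n = d) → u d ≤ u (d - 1) := by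
  obtain ⟨hsym, hnn, hdiag⟩ := hw
  set G := wGraph w with hG
  -- Laplacian rewriting
  have hBq : ∀ n, ∑ k, w n k * (ψ n - ψ k) = q n := by
    intro n
    rw [← hq]
    simp only [Matrix.mulVec, dotProduct, lapMat]
    have : ∀ k ∈ Finset.univ, (if n = k then ∑ j, w n j else - w n k) * ψ k
        = (if k = n then (∑ j, w n j) * ψ n else 0) - w n k * ψ k := by
      intro k _
      by_cases h : k = n
      · subst h; simp [hdiag]
      · simp [h, Ne.symm h]
    rw [Finset.sum_congr rfl this, Finset.sum_sub_distrib, Finset.sum_ite_eq' Finset.univ n]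
    simp only [Finset.mem_univ, if_pos]
    simp [mul_sub, Finset.sum_sub_distrib, ← Finset.sum_mul]
  -- sSup facts
  have hfin : ∀ e : ℕ, {x : ℝ | ∃ n, G.dist r n = e ∧ x = ψ n}.Finite := by
    intro e
    exact (Set.finite_range ψ).subset (by rintro x ⟨n, _, rfl⟩; exact ⟨n, rfl⟩)
  have hub : ∀ (e : ℕ) (n), G.dist r n = e → ψ n ≤ u e := by
    intro e n h
    rw [hu]
    exact le_csSup (hfin e).bddAbove ⟨n, h, rfl⟩
  have hmemu : ∀ e : ℕ, (∃ n, G.dist r n = e) → ∃ n, G.dist r n = e ∧ u e = ψ n := by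
    rintro e ⟨n, h⟩
    rw [hu]
    have hmem : ψ n ∈ {x : ℝ | ∃ n, G.dist r n = e ∧ x = ψ n} := ⟨n, h, rfl⟩
    exact Set.Nonempty.csSup_mem ⟨_, hmem⟩ (hfin e)
  -- adjacency from nonzero weight
  have hadj : ∀ a b : Fin N, w a b ≠ 0 → G.Adj a b := by
    intro a b hab
    refine ⟨?_, Or.inl hab⟩
    rintro rfl; exact hab (hdiag a)
  have hwadj : ∀ a b : Fin N, G.Adj a b → w a b ≠ 0 := by
    intro a b h
    rcases h.2 with h' | h'
    · exact h'
    · rw [hsym]; exact h'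
  -- dist triangle along edges
  have hdadj : ∀ a b : Fin N, G.Adj a b → G.dist r b ≤ G.dist r a + 1 := by
    intro a b h
    obtain ⟨p, hp⟩ := (hconn r a).exists_walk_length_eq_dist
    calc G.dist r b ≤ (p.concat h).length := SimpleGraph.dist_le _
      _ = G.dist r a + 1 := by rw [SimpleGraph.Walk.length_concat, hp]
  intro d hd ⟨n0, hn0⟩
  -- set of far nodes
  set A : Finset (Fin N) := Finset.univ.filter (fun n => d ≤ G.dist r n) with hA
  have hn0A : n0 ∈ A := by simp [hA, hn0]
  obtain ⟨b, hbA, hbmax⟩ := Finset.exists_max_image A ψ ⟨n0, hn0A⟩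
  set B : Finset (Fin N) := A.filter (fun n => ψ n = ψ b) with hB
  obtain ⟨t, htB, htmin⟩ := Finset.exists_min_image B (fun n => G.dist r n) ⟨b, by simp [hB, hbA]⟩
  have htA : t ∈ A := (Finset.mem_filter.mp htB).1
  have htψ : ψ t = ψ b := (Finset.mem_filter.mp htB).2
  have htd : d ≤ G.dist r t := (Finset.mem_filter.mp htA).2
  have htmax : ∀ n ∈ A, ψ n ≤ ψ t := fun n hn => htψ ▸ hbmax n hn
  -- t ≠ r, so q t ≤ 0
  have htr : t ≠ r := by
    rintro rfl
    rw [SimpleGraph.dist_self] at htd; omega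
  have hqt : q t ≤ 0 := by
    by_cases hts : t = s
    · subst hts; exact hqs
    · rw [hq0 t htr hts]
  -- find previous-layer neighbor m
  obtain ⟨p, hp⟩ := (hconn r t).exists_walk_length_eq_dist
  have hplen : 1 ≤ p.length := by rw [hp]; omega
  obtain ⟨m, hmadj, hmq⟩ : ∃ m, G.Adj t m ∧ ∃ qw : G.Walk m r, qw.length = G.dist r t - 1 := by
    cases hrev : p.reverse with
    | nil =>
      exfalso
      have := congrArg SimpleGraph.Walk.length hrev
      rw [SimpleGraph.Walk.length_reverse] at this
      simp at this; omega
    | cons h qw =>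
      refine ⟨_, h, qw, ?_⟩
      have := congrArg SimpleGraph.Walk.length hrev
      rw [SimpleGraph.Walk.length_reverse] at this
      simp only [SimpleGraph.Walk.length_cons] at this
      omega
  obtain ⟨qw, hqw⟩ := hmq
  have hmle : G.dist r m ≤ G.dist r t - 1 := by
    calc G.dist r m ≤ qw.reverse.length := SimpleGraph.dist_le _
      _ = G.dist r t - 1 := by rw [SimpleGraph.Walk.length_reverse, hqw]
  have hmge : G.dist r t - 1 ≤ G.dist r m := by
    have := hdadj m t hmadj.symm
    omega
  have hmd : G.dist r m = G.dist r t - 1 := le_antisymm hmle hmge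
  -- generic: all neighbors of t have distance ≥ dist r t - 1
  have hnbr : ∀ k : Fin N, w t k ≠ 0 → G.dist r t - 1 ≤ G.dist r k := by
    intro k hk
    have := hdadj k t (hadj t k hk).symm
    omega
  -- key step packaged: if all ψ-values of w-neighbors of t are ≤ ψ t, then ψ m = ψ t
  have hkey : (∀ k : Fin N, w t k ≠ 0 → ψ k ≤ ψ t) → ψ m = ψ t := by
    intro hle
    have hterm : ∀ k ∈ Finset.univ, (0:ℝ) ≤ w t k * (ψ t - ψ k) := by
      intro k _
      by_cases hk : w t k = 0
      · simp [hk]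
      · exact mul_nonneg (hnn t k) (by linarith [hle k hk])
    have hsum0 : ∑ k, w t k * (ψ t - ψ k) = 0 :=
      le_antisymm (by rw [hBq]; exact hqt) (Finset.sum_nonneg hterm)
    have := (Finset.sum_eq_zero_iff_of_nonneg hterm).mp hsum0 m (Finset.mem_univ m)
    rcases mul_eq_zero.mp this with h | h
    · exact absurd h (hwadj t m hmadj)
    · linarith
  -- dist r t = d
  have htdeq : G.dist r t = d := by
    by_contra hne
    have hgt : d < G.dist r t := lt_of_le_of_ne htd (Ne.symm hne)
    have hψm : ψ m = ψ t := by
      apply hkey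
      intro k hk
      apply htmax
      simp only [hA, Finset.mem_filter, Finset.mem_univ, true_and]
      have := hnbr k hk
      omega
    have hmB : m ∈ B := by
      simp only [hB, hA, Finset.mem_filter, Finset.mem_univ, true_and]
      exact ⟨by omega, by rw [hψm, htψ]⟩
    have := htmin m hmB
    omega
  -- conclude
  obtain ⟨n1, hn1, hun1⟩ := hmemu d ⟨n0, hn0⟩
  have h1 : u d ≤ ψ t := by
    rw [hun1]
    exact htmax n1 (by simp [hA, hn1])
  by_contra hcon
  push_neg at hcon
  have hMgt : u (d-1) < ψ t := lt_of_lt_of_le hcon h1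
  have hψm : ψ m = ψ t := by
    apply hkey
    intro k hk
    have hk1 := hnbr k hk
    by_cases hkd : d ≤ G.dist r k
    · exact htmax k (by simp [hA, hkd])
    · have : G.dist r k = d - 1 := by omega
      have := hub (d-1) k this
      linarith
  have : ψ m ≤ u (d-1) := hub (d-1) m (by omega)
  linarith
end

section
/- Let ψ solve B ψ = q where q_r ≥ 0, q_s ≤ 0, and q_n = 0 otherwise, with B the Laplacian of a finite connected weighted graph. Define ℓ_d as the minimum of ψ_n over nodes n at distance d from s. Then ℓ_d ≥ ℓ_{d-1} for all 1 ≤ d ≤ d_max. -/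
open Matrix BigOperators

/-- The Laplacian applied to ψ, written as a weighted sum of differences. -/
lemma lap_apply {N : ℕ} (w : Fin N → Fin N → ℝ) (hww : ∀ i, w i i = 0) (ψ q : Fin N → ℝ)
    (hq : (lapMat w).mulVec ψ = q) (i : Fin N) :
    ∑ k, w i k * (ψ i - ψ k) = q i := by
  have h := congrFun hq i
  rw [Matrix.mulVec, dotProduct] at h
  rw [← h]
  have e1 : ∀ j : Fin N, lapMat w i j * ψ j
      = (if i = j then (∑ k, w i k) * ψ j else 0) + (- (w i j * ψ j)) := by
    intro j
    simp only [lapMat]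
    split
    · next hij => subst hij; simp [hww i]
    · ring
  rw [Finset.sum_congr rfl (fun j _ => e1 j), Finset.sum_add_distrib,
    Finset.sum_ite_eq Finset.univ i (fun j => (∑ k, w i k) * ψ j)]
  simp [Finset.mul_sum, Finset.sum_sub_distrib, mul_sub]
  rw [← Finset.sum_mul]
  ring

/-- A vertex at positive distance has a neighbor one step closer. -/
lemma exists_closer_neighbor {N : ℕ} (w : Fin N → Fin N → ℝ) (hw : IsWeight w)
    (hconn : (wGraph w).Connected) (s u : Fin N) (hpos : 1 ≤ (wGraph w).dist s u) :
    ∃ v, w u v ≠ 0 ∧ (wGraph w).dist s v + 1 = (wGraph w).dist s u := by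
  obtain ⟨p, hp⟩ := hconn.exists_walk_length_eq_dist s u
  have hlen : 1 ≤ p.length := hp ▸ hpos
  have hq := p.reverse
  cases hrev : p.reverse with
  | nil =>
      exfalso
      simp [SimpleGraph.dist_self] at hpos
  | cons hadj q =>
      rename_i v
      have hlenrev : (SimpleGraph.Walk.cons hadj q).length = p.length := by
        rw [← hrev]; simp
      refine ⟨v, ?_, ?_⟩
      · rcases hadj.2 with h | h
        · exact h
        · rw [hw.1 u v]; exact h
      · have h1 : (wGraph w).dist s v ≤ p.length - 1 := by
          have hqd := (wGraph w).dist_le q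
          have hql : q.length + 1 = p.length := by simpa using hlenrev
          rw [SimpleGraph.dist_comm]
          omega
        have h2 : (wGraph w).dist s u ≤ (wGraph w).dist s v + 1 := by
          have htri := hconn.dist_triangle (u := s) (v := v) (w := u)
          have hd1 : (wGraph w).dist v u ≤ 1 := by
            have := (wGraph w).dist_le (SimpleGraph.Walk.cons hadj.symm SimpleGraph.Walk.nil)
            simpa [SimpleGraph.dist_comm] using this
          omega
        omega

theorem potential_min_increases_with_distance {N : ℕ} (w : Fin N → Fin N → ℝ)
    (hw : IsWeight w) (hconn : (wGraph w).Connected)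
    (r s : Fin N) (q ψ : Fin N → ℝ)
    (hq : (lapMat w).mulVec ψ = q)
    (hqr : 0 ≤ q r) (hqs : q s ≤ 0) (hq0 : ∀ n, n ≠ r → n ≠ s → q n = 0)
    (ℓ : ℕ → ℝ)
    (hl : ∀ d, ℓ d = sInf {x : ℝ | ∃ n, (wGraph w).dist s n = d ∧ x = ψ n}) :
    ∀ d : ℕ, 1 ≤ d → (∃ n, (wGraph w).dist s n = d) → ℓ (d - 1) ≤ ℓ d := by
  intro d hd ⟨n₀, hn₀⟩
  classical
  obtain ⟨hwsymm, hwpos, hwdiag⟩ := hw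
  set G := wGraph w with hG
  -- the set of vertices at distance ≥ d
  set U : Finset (Fin N) := Finset.univ.filter (fun n => d ≤ G.dist s n) with hU
  have hn₀U : n₀ ∈ U := by simp [hU, hn₀]
  obtain ⟨m', hm'U, hm'min⟩ := U.exists_min_image ψ ⟨n₀, hn₀U⟩
  set U2 : Finset (Fin N) := U.filter (fun n => ψ n = ψ m') with hU2
  obtain ⟨u, huU2, humin⟩ := U2.exists_min_image (G.dist s) ⟨m', by simp [hU2, hm'U]⟩
  have huU : u ∈ U := (Finset.mem_filter.mp huU2).1
  have hψu : ψ u = ψ m' := (Finset.mem_filter.mp huU2).2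
  have hud : d ≤ G.dist s u := (Finset.mem_filter.mp huU).2
  -- ψ u is minimal on U
  have huminψ : ∀ n ∈ U, ψ u ≤ ψ n := fun n hn => hψu ▸ hm'min n hn
  -- u ≠ s, so q u ≥ 0
  have hus : u ≠ s := by
    intro h
    rw [h, SimpleGraph.dist_self] at hud
    omega
  have hqu : 0 ≤ q u := by
    by_cases hur : u = r
    · exact hur ▸ hqr
    · exact le_of_eq (hq0 u hur hus).symm
  have hsum : 0 ≤ ∑ k, w u k * (ψ u - ψ k) := by
    rw [lap_apply w hwdiag ψ q hq u]; exact hqu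
  -- a neighbor of u one step closer
  obtain ⟨v, hwv, hvdist⟩ := exists_closer_neighbor w ⟨hwsymm, hwpos, hwdiag⟩ hconn s u
    (le_trans hd hud)
  rw [← hG] at hvdist
  -- any nonzero-weight neighbor k satisfies dist s u ≤ dist s k + 1
  have hnbr : ∀ k, w u k ≠ 0 → G.dist s u ≤ G.dist s k + 1 := by
    intro k hk
    have hne : u ≠ k := fun h => hk (h ▸ hwdiag u)
    have htri := hconn.dist_triangle (u := s) (v := k) (w := u)
    have hd1 : G.dist k u ≤ 1 := by
      have hadj : G.Adj k u := ⟨hne.symm, Or.inr hk⟩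
      have := G.dist_le (SimpleGraph.Walk.cons hadj SimpleGraph.Walk.nil)
      simpa using this
    omega
  -- the distance of u is exactly d
  have hDd : G.dist s u = d := by
    by_contra hD
    have hDgt : d < G.dist s u := lt_of_le_of_ne hud (Ne.symm hD)
    -- all terms nonpositive
    have hterms : ∀ k ∈ Finset.univ, w u k * (ψ u - ψ k) ≤ 0 := by
      intro k _
      by_cases hk : w u k = 0
      · simp [hk]
      · have hkd : d ≤ G.dist s k := by have := hnbr k hk; omega
        have hkU : k ∈ U := by simp [hU, hkd]
        have := huminψ k hkU
        exact mul_nonpos_of_nonneg_of_nonpos (hwpos u k) (by linarith)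
    have hzero : ∀ k ∈ Finset.univ, w u k * (ψ u - ψ k) = 0 := by
      rw [← Finset.sum_eq_zero_iff_of_nonpos hterms]
      exact le_antisymm (Finset.sum_nonpos hterms) hsum
    have hvterm := hzero v (Finset.mem_univ v)
    have hψv : ψ v = ψ u := by
      rcases mul_eq_zero.mp hvterm with h | h
      · exact absurd h hwv
      · linarith
    have hvd : d ≤ G.dist s v := by omega
    have hvU2 : v ∈ U2 := by
      simp only [hU2, Finset.mem_filter]
      exact ⟨by simp [hU, hvd], by rw [hψv, hψu]⟩
    have := humin v hvU2
    omega
  -- find a vertex at distance d - 1 with ψ value ≤ ψ u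
  have hkey : ∃ k, G.dist s k = d - 1 ∧ ψ k ≤ ψ u := by
    by_contra hcon
    push_neg at hcon
    have hterms : ∀ k ∈ Finset.univ, w u k * (ψ u - ψ k) ≤ 0 := by
      intro k _
      by_cases hk : w u k = 0
      · simp [hk]
      · have hkd : d - 1 ≤ G.dist s k := by have := hnbr k hk; omega
        rcases Nat.lt_or_ge (G.dist s k) d with h | h
        · have hkd1 : G.dist s k = d - 1 := by omega
          have := hcon k hkd1
          exact mul_nonpos_of_nonneg_of_nonpos (hwpos u k) (by linarith)
        · have hkU : k ∈ U := by simp [hU, h]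
          have := huminψ k hkU
          exact mul_nonpos_of_nonneg_of_nonpos (hwpos u k) (by linarith)
    have hvd : G.dist s v = d - 1 := by omega
    have hψv := hcon v hvd
    have hvterm : w u v * (ψ u - ψ v) < 0 :=
      mul_neg_of_pos_of_neg (lt_of_le_of_ne (hwpos u v) (Ne.symm hwv)) (by linarith)
    have : ∑ k, w u k * (ψ u - ψ k) < 0 := by
      calc ∑ k, w u k * (ψ u - ψ k) < ∑ _k : Fin N, (0:ℝ) :=
            Finset.sum_lt_sum hterms ⟨v, Finset.mem_univ v, hvterm⟩
        _ = 0 := by simp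
    linarith
  obtain ⟨k₀, hk₀d, hk₀ψ⟩ := hkey
  -- conclude via sInf
  rw [hl (d-1), hl d]
  have hbdd : ∀ e : ℕ, BddBelow {x : ℝ | ∃ n, G.dist s n = e ∧ x = ψ n} := by
    intro e
    apply Set.Finite.bddBelow
    apply Set.Finite.subset (Set.finite_range ψ)
    rintro x ⟨n, _, rfl⟩
    exact ⟨n, rfl⟩
  have h1 : sInf {x : ℝ | ∃ n, G.dist s n = d - 1 ∧ x = ψ n} ≤ ψ k₀ :=
    csInf_le (hbdd (d-1)) ⟨k₀, hk₀d, rfl⟩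
  have h2 : ψ u ≤ sInf {x : ℝ | ∃ n, G.dist s n = d ∧ x = ψ n} := by
    have hne : Set.Nonempty {x : ℝ | ∃ n, G.dist s n = d ∧ x = ψ n} := ⟨ψ n₀, n₀, hn₀, rfl⟩
    apply le_csInf hne
    rintro x ⟨n, hn, rfl⟩
    exact huminψ n (by simp [hU, hn.ge])
  linarith
end

section
/- (Shapiro's electrical lemma) In an unweighted connected graph with unit current injected at r and extracted at s, the current on any edge (m,n) equals (N(r, m→n, s) - N(r, n→m, s)) / N, where N(r, m→n, s) is the number of spanning trees containing a path from r to s that traverses edge (m,n) from m to n, and N is the total number of spanning trees. -/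
open Matrix BigOperators

/-- `H` is a spanning tree of the ambient graph. -/
def IsSpanningTree {V : Type*} {G : SimpleGraph V} (H : G.Subgraph) : Prop :=
  H.IsSpanning ∧ H.spanningCoe.IsTree

/-- `H` contains a path from `r` to `s` traversing the edge `(m,n)` from `m`
to `n`. -/
def HasPathThrough {V : Type*} {G : SimpleGraph V} (H : G.Subgraph)
    (r s m n : V) : Prop :=
  ∃ p : H.spanningCoe.Walk r s, p.IsPath ∧ ∃ d ∈ p.darts, d.toProd = (m, n)


section Aux
open SimpleGraph
variable {V : Type*}



instance finSub [Finite V] (G : SimpleGraph V) : Finite G.Subgraph := by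
  have : Function.Injective (fun H : G.Subgraph => (H.verts, H.Adj)) := by
    intro H1 H2 h
    simp only [Prod.mk.injEq] at h
    exact SimpleGraph.Subgraph.ext h.1 h.2
  exact Finite.of_injective _ this

lemma reach_add_edge {K : SimpleGraph V} {m n a b : V}
    (h : (K ⊔ fromEdgeSet {s(m,n)}).Reachable a b) :
    K.Reachable a b ∨ (K.Reachable a m ∧ K.Reachable n b) ∨
      (K.Reachable a n ∧ K.Reachable m b) := by
  obtain ⟨w⟩ := h
  induction w with
  | nil => exact Or.inl (Reachable.refl _)
  | cons hadj w ih =>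
    rename_i x y z
    rcases hadj with hK | hE
    · rcases ih with h1 | ⟨h1, h2⟩ | ⟨h1, h2⟩
      · exact Or.inl (hK.reachable.trans h1)
      · exact Or.inr (Or.inl ⟨hK.reachable.trans h1, h2⟩)
      · exact Or.inr (Or.inr ⟨hK.reachable.trans h1, h2⟩)
    · rw [fromEdgeSet_adj, Set.mem_singleton_iff, Sym2.eq_iff] at hE
      rcases hE.1 with ⟨rfl, rfl⟩ | ⟨rfl, rfl⟩
      · rcases ih with h1 | ⟨h1, h2⟩ | ⟨h1, h2⟩
        · exact Or.inr (Or.inl ⟨Reachable.refl _, h1⟩)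
        · exact Or.inl (h1.symm.trans h2)
        · exact Or.inl h2
      · rcases ih with h1 | ⟨h1, h2⟩ | ⟨h1, h2⟩
        · exact Or.inr (Or.inr ⟨Reachable.refl _, h1⟩)
        · exact Or.inl h2
        · exact Or.inl (h1.symm.trans h2)

lemma split_reach {K : SimpleGraph V} {r s : V} (p : K.Walk r s) (hp : p.IsTrail)
    {d : K.Dart} (hd : d ∈ p.darts) :
    (K.deleteEdges {d.edge}).Reachable r d.fst ∧
      (K.deleteEdges {d.edge}).Reachable d.snd s := by
  induction p with
  | nil => simp at hd
  | cons h q ih =>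
    rename_i a b c
    rw [Walk.isTrail_cons] at hp
    rw [Walk.darts_cons, List.mem_cons] at hd
    rcases hd with rfl | hd
    · refine ⟨Reachable.refl _, ?_⟩
      have hq : ∀ e ∈ q.edges, e ∉ ({Dart.edge ⟨(a,b), h⟩} : Set (Sym2 V)) := by
        intro e he
        simp only [Set.mem_singleton_iff]
        rintro rfl
        exact hp.2 he
      exact ⟨q.toDeleteEdges _ hq⟩
    · obtain ⟨h1, h2⟩ := ih hp.1 hd
      have hne : s(a, b) ≠ d.edge := by
        intro hh
        exact hp.2 (hh ▸ (List.mem_map_of_mem (f := SimpleGraph.Dart.edge) hd))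
      have hadj : (K.deleteEdges {d.edge}).Adj a b := by
        rw [deleteEdges_adj]
        exact ⟨h, by simpa using hne⟩
      exact ⟨hadj.reachable.trans h1, h2⟩

lemma walk_div {N : ℕ} {K : SimpleGraph (Fin N)} {r s : Fin N} (p : K.Walk r s)
    (hp : p.IsPath) (v : Fin N) :
    ∑ u : Fin N, ((if ∃ d ∈ p.darts, d.toProd = (v, u) then (1:ℝ) else 0)
      - (if ∃ d ∈ p.darts, d.toProd = (u, v) then (1:ℝ) else 0))
    = (if v = r then 1 else 0) - (if v = s then 1 else 0) := by
  induction p with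
  | nil => simp
  | cons h q ih =>
    rename_i a b c
    rw [Walk.cons_isPath_iff] at hp
    obtain ⟨hq, ha⟩ := hp
    have hdart : ∀ d ∈ q.darts, d.toProd.1 ≠ a ∧ d.toProd.2 ≠ a := by
      intro d hd
      constructor
      · intro hh; exact ha (hh ▸ Walk.dart_fst_mem_support_of_mem_darts _ hd)
      · intro hh; exact ha (hh ▸ Walk.dart_snd_mem_support_of_mem_darts _ hd)
    by_cases hv : v = a
    · subst hv
      have hvs : v ≠ c := fun hh => ha (hh ▸ Walk.end_mem_support q)
      have hA : ∀ u : Fin N, (∃ d ∈ (Walk.cons h q).darts, d.toProd = (v, u)) ↔ u = b := by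
        intro u
        simp only [Walk.darts_cons, List.mem_cons]
        constructor
        · rintro ⟨d, (rfl | hd), hdp⟩
          · rw [Prod.mk.injEq] at hdp
            exact hdp.2.symm
          · exact absurd (congrArg Prod.fst hdp) (hdart d hd).1
        · rintro rfl
          exact ⟨_, Or.inl rfl, rfl⟩
      have hB : ∀ u : Fin N, ¬(∃ d ∈ (Walk.cons h q).darts, d.toProd = (u, v)) := by
        rintro u ⟨d, hd, hdp⟩
        rw [Walk.darts_cons, List.mem_cons] at hd
        rcases hd with rfl | hd
        · exact h.ne' (congrArg Prod.snd hdp)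
        · exact (hdart d hd).2 (congrArg Prod.snd hdp)
      have hB' : ∀ u : Fin N,
          (if (∃ d ∈ (Walk.cons h q).darts, d.toProd = (u, v)) then (1:ℝ) else 0) = 0 :=
        fun u => if_neg (hB u)
      simp only [hA, hB', sub_zero]
      rw [Finset.sum_ite_eq' Finset.univ b (fun _ => (1:ℝ))]
      simp [hvs]
    · have hA : ∀ u : Fin N, (∃ d ∈ (Walk.cons h q).darts, d.toProd = (v, u)) ↔
          (∃ d ∈ q.darts, d.toProd = (v, u)) := by
        intro u
        simp only [Walk.darts_cons, List.mem_cons]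
        constructor
        · rintro ⟨d, (rfl | hd), hdp⟩
          · exact absurd (congrArg Prod.fst hdp).symm hv
          · exact ⟨d, hd, hdp⟩
        · rintro ⟨d, hd, hdp⟩; exact ⟨d, Or.inr hd, hdp⟩
      have hBsplit : ∀ u : Fin N,
          (if (∃ d ∈ (Walk.cons h q).darts, d.toProd = (u, v)) then (1:ℝ) else 0)
          = (if (∃ d ∈ q.darts, d.toProd = (u, v)) then (1:ℝ) else 0)
            + (if u = a then (if v = b then (1:ℝ) else 0) else 0) := by
        intro u
        by_cases hu : u = a
        · subst hu
          have h1 : ¬(∃ d ∈ q.darts, d.toProd = (u, v)) := by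
            rintro ⟨d, hd, hdp⟩
            exact (hdart d hd).1 (congrArg Prod.fst hdp)
          by_cases hvb : v = b
          · subst hvb
            have h2 : (∃ d ∈ (Walk.cons h q).darts, d.toProd = (u, v)) :=
              ⟨⟨(u, v), h⟩, by rw [Walk.darts_cons]; exact List.mem_cons_self, rfl⟩
            rw [if_pos h2, if_neg h1, if_pos rfl, if_pos rfl, zero_add]
          · have h2 : ¬(∃ d ∈ (Walk.cons h q).darts, d.toProd = (u, v)) := by
              rintro ⟨d, hd, hdp⟩
              rw [Walk.darts_cons, List.mem_cons] at hd
              rcases hd with rfl | hd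
              · exact hvb (congrArg Prod.snd hdp).symm
              · exact h1 ⟨d, hd, hdp⟩
            rw [if_neg h2, if_neg h1, if_pos rfl, if_neg hvb, add_zero]
        · have h2 : (∃ d ∈ (Walk.cons h q).darts, d.toProd = (u, v)) ↔
              (∃ d ∈ q.darts, d.toProd = (u, v)) := by
            simp only [Walk.darts_cons, List.mem_cons]
            constructor
            · rintro ⟨d, (rfl | hd), hdp⟩
              · exact absurd (congrArg Prod.fst hdp).symm hu
              · exact ⟨d, hd, hdp⟩
            · rintro ⟨d, hd, hdp⟩; exact ⟨d, Or.inr hd, hdp⟩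
          rw [if_congr h2 rfl rfl, if_neg hu, add_zero]
      simp only [hA, hBsplit]
      have hsplit : ∀ u : Fin N,
          ((if (∃ d ∈ q.darts, d.toProd = (v, u)) then (1:ℝ) else 0)
            - ((if (∃ d ∈ q.darts, d.toProd = (u, v)) then (1:ℝ) else 0)
              + (if u = a then (if v = b then (1:ℝ) else 0) else 0)))
          = ((if (∃ d ∈ q.darts, d.toProd = (v, u)) then (1:ℝ) else 0)
            - (if (∃ d ∈ q.darts, d.toProd = (u, v)) then (1:ℝ) else 0))
            - (if u = a then (if v = b then (1:ℝ) else 0) else 0) := by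
        intro u; ring
      rw [Finset.sum_congr rfl (fun u _ => hsplit u), Finset.sum_sub_distrib, ih hq,
        Finset.sum_ite_eq' Finset.univ a (fun _ => (if v = b then (1:ℝ) else 0))]
      simp [hv]

lemma sup_delete_eq {G : SimpleGraph V} {m n : V} (h : G.Adj m n) :
    G.deleteEdges {s(m, n)} ⊔ fromEdgeSet {s(m, n)} = G := by
  ext x y
  simp only [sup_adj, deleteEdges_adj, fromEdgeSet_adj, Set.mem_singleton_iff]
  constructor
  · rintro (⟨hxy, _⟩ | ⟨he, hne⟩)
    · exact hxy
    · rw [Sym2.eq_iff] at he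
      rcases he with ⟨rfl, rfl⟩ | ⟨rfl, rfl⟩
      · exact h
      · exact h.symm
  · intro hxy
    by_cases he : s(x, y) = s(m, n)
    · exact Or.inr ⟨he, hxy.ne⟩
    · exact Or.inl ⟨hxy, he⟩

lemma exists_tree_le [Finite V] (G : SimpleGraph V) (h : G.Connected) :
    ∃ T ≤ G, T.IsTree := by
  classical
  generalize hk : Set.ncard G.edgeSet = k
  induction k using Nat.strong_induction_on generalizing G with
  | _ k ih =>
    by_cases hac : G.IsAcyclic
    · exact ⟨G, le_refl _, ⟨h, hac⟩⟩
    · rw [isAcyclic_iff_forall_adj_isBridge] at hac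
      push_neg at hac
      obtain ⟨v, w, hvw, hbr⟩ := hac
      rw [isBridge_iff] at hbr
      push_neg at hbr
      have hreach : (G.deleteEdges {s(v, w)}).Reachable v w := hbr
      set G' := G.deleteEdges {s(v, w)} with hG'
      have hconn' : G'.Connected := by
        rw [connected_iff] at h ⊢
        refine ⟨fun a b => ?_, h.2⟩
        have := h.1 a b
        rw [← sup_delete_eq hvw] at this
        rcases reach_add_edge this with h1 | ⟨h1, h2⟩ | ⟨h1, h2⟩
        · exact h1
        · exact (h1.trans hreach).trans h2
        · exact (h1.trans hreach.symm).trans h2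
      have hcard : Set.ncard G'.edgeSet < k := by
        rw [← hk, hG', edgeSet_deleteEdges]
        have hfin : G.edgeSet.Finite := Set.toFinite _
        have hmem : s(v, w) ∈ G.edgeSet := hvw
        have : G.edgeSet \ {s(v, w)} ⊂ G.edgeSet :=
          (Set.ssubset_iff_of_subset Set.diff_subset).2 ⟨_, hmem, fun hc => hc.2 rfl⟩
        exact Set.ncard_lt_ncard this hfin
      obtain ⟨T, hT1, hT2⟩ := ih _ hcard G' hconn' rfl
      exact ⟨T, le_trans hT1 (deleteEdges_le _), hT2⟩

lemma reach_of_mem_support {K : SimpleGraph V} {u v x : V} {w : K.Walk u v}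
    (h : x ∈ w.support) : K.Reachable u x := by
  classical
  exact ⟨w.takeUntil x h⟩

lemma acyclic_mono {H K : SimpleGraph V} (h : H ≤ K) (hK : K.IsAcyclic) :
    H.IsAcyclic := fun _ c hc => hK (c.mapLe h) ((SimpleGraph.Walk.mapLe_isCycle h).2 hc)

/-- A two-component spanning forest separating `r` (with `m`) from `s` (with `n`). -/
def TwoF (H : SimpleGraph V) (r s m n : V) : Prop :=
  H.IsAcyclic ∧ (∀ v, H.Reachable r v ∨ H.Reachable s v) ∧ ¬H.Reachable r s ∧
    H.Reachable r m ∧ H.Reachable s n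

lemma tree_delete {T : SimpleGraph V} (hT : T.IsTree) {r s m n : V}
    (p : T.Walk r s) (hp : p.IsPath) {d : T.Dart} (hd : d ∈ p.darts)
    (hdp : d.toProd = (m, n)) :
    TwoF (T.deleteEdges {s(m, n)}) r s m n ∧ T.Adj m n := by
  have hadj : T.Adj m n := by
    have := d.adj
    rwa [show d.toProd.1 = m from congrArg Prod.fst hdp,
      show d.toProd.2 = n from congrArg Prod.snd hdp] at this
  have hedge : d.edge = s(m, n) := by
    rw [Dart.edge, show d.fst = m from congrArg Prod.fst hdp,
      show d.snd = n from congrArg Prod.snd hdp]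
  set H := T.deleteEdges {s(m, n)} with hH
  obtain ⟨h1, h2⟩ := split_reach p hp.isTrail hd
  rw [hedge] at h1 h2
  rw [show d.toProd.1 = m from congrArg Prod.fst hdp] at h1
  rw [show d.toProd.2 = n from congrArg Prod.snd hdp] at h2
  have hbr : ¬H.Reachable m n := by
    have := (isAcyclic_iff_forall_adj_isBridge.mp hT.IsAcyclic) hadj
    rw [isBridge_iff] at this
    exact this
  have hrs : ¬H.Reachable r s := fun hc =>
    hbr ((h1.symm.trans hc).trans h2.symm)
  have hcov : ∀ v, H.Reachable r v ∨ H.Reachable s v := by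
    intro v
    have hrv : T.Reachable r v := hT.isConnected r v
    rw [← sup_delete_eq hadj] at hrv
    rcases reach_add_edge hrv with hx | ⟨hx, hy⟩ | ⟨hx, hy⟩
    · exact Or.inl hx
    · exact Or.inr (h2.symm.trans hy)
    · exact absurd hbr (fun hc => hc (h1.symm.trans hx))
  exact ⟨⟨acyclic_mono (deleteEdges_le _) hT.IsAcyclic, hcov, hrs, h1, h2.symm⟩, hadj⟩
lemma delete_sup_distrib (A B : SimpleGraph V) (t : Set (Sym2 V)) :
    (A ⊔ B).deleteEdges t = A.deleteEdges t ⊔ B.deleteEdges t := by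
  ext x y
  simp only [deleteEdges_adj, sup_adj]
  tauto

lemma delete_nonedge {H : SimpleGraph V} {m n : V} (h : ¬H.Adj m n) :
    H.deleteEdges {s(m, n)} = H := by
  ext x y
  simp only [deleteEdges_adj, Set.mem_singleton_iff, and_iff_left_iff_imp]
  intro hxy he
  rw [Sym2.eq_iff] at he
  rcases he with ⟨rfl, rfl⟩ | ⟨rfl, rfl⟩
  · exact h hxy
  · exact h hxy.symm

lemma fromEdgeSet_delete_self (e : Sym2 V) :
    (fromEdgeSet {e} : SimpleGraph V).deleteEdges {e} = ⊥ := by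
  ext x y
  simp only [deleteEdges_adj, fromEdgeSet_adj, Set.mem_singleton_iff, bot_adj, iff_false]
  rintro ⟨⟨rfl, -⟩, hc⟩
  exact hc rfl

lemma fromEdgeSet_delete_ne {e f : Sym2 V} (h : f ≠ e) :
    (fromEdgeSet {e} : SimpleGraph V).deleteEdges {f} = fromEdgeSet {e} := by
  ext x y
  simp only [deleteEdges_adj, fromEdgeSet_adj, Set.mem_singleton_iff, and_iff_left_iff_imp]
  rintro ⟨rfl, -⟩ hc
  exact h hc.symm

lemma support_mapLe {A B : SimpleGraph V} (h : A ≤ B) {u v : V} (p : A.Walk u v) :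
    (p.mapLe h).support = p.support := by
  induction p with
  | nil => rfl
  | cons hadj q ih => simp only [Walk.mapLe, Walk.map_cons, Walk.support_cons] at *; rw [ih]

lemma isPath_mapLe {A B : SimpleGraph V} (h : A ≤ B) {u v : V} {p : A.Walk u v}
    (hp : p.IsPath) : (p.mapLe h).IsPath := hp.mapLe h

lemma twoF_add {H : SimpleGraph V} {r s m n : V} (h2F : TwoF H r s m n) (hmn : m ≠ n) :
    (H ⊔ fromEdgeSet {s(m,n)}).IsTree ∧
    (∃ p : (H ⊔ fromEdgeSet {s(m,n)}).Walk r s, p.IsPath ∧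
      ∃ d ∈ p.darts, d.toProd = (m, n)) ∧
    ¬H.Adj m n ∧ (H ⊔ fromEdgeSet {s(m,n)}).deleteEdges {s(m,n)} = H := by
  obtain ⟨hac, hcov, hrs, hrm, hsn⟩ := h2F
  have hnotmn : ¬H.Reachable m n := fun h => hrs ((hrm.trans h).trans hsn.symm)
  have hHadj : ¬H.Adj m n := fun h => hnotmn h.reachable
  set T := H ⊔ fromEdgeSet {s(m,n)} with hT
  have hHle : H ≤ T := le_sup_left
  have hTadj : T.Adj m n := Or.inr ⟨rfl, hmn⟩
  have hdel : T.deleteEdges {s(m,n)} = H := by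
    rw [hT, delete_sup_distrib, delete_nonedge hHadj, fromEdgeSet_delete_self, sup_bot_eq]
  -- connectivity
  have hreachall : ∀ v, T.Reachable r v := by
    intro v
    rcases hcov v with hv | hv
    · exact hv.mono hHle
    · exact (((hrm.mono hHle).trans hTadj.reachable).trans (hsn.symm.mono hHle)).trans
        (hv.mono hHle)
  have hconnT : T.Connected := by
    rw [connected_iff]
    exact ⟨fun a b => (hreachall a).symm.trans (hreachall b), ⟨r⟩⟩
  -- acyclicity
  have hacT : T.IsAcyclic := by
    rw [isAcyclic_iff_forall_adj_isBridge]
    intro x y hxy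
    rw [isBridge_iff]
    intro hreach
    have hreach' : (T.deleteEdges {s(x,y)}).Reachable x y := hreach
    by_cases hf : s(x,y) = s(m,n)
    · rw [hf, hdel] at hreach'
      rw [Sym2.eq_iff] at hf
      rcases hf with ⟨rfl, rfl⟩ | ⟨rfl, rfl⟩
      · exact hnotmn hreach'
      · exact hnotmn hreach'.symm
    · have hH : H.Adj x y := by
        rcases hxy with hH | hE
        · exact hH
        · exact absurd hE.1 hf
      rw [hT, delete_sup_distrib, fromEdgeSet_delete_ne hf] at hreach'
      rcases reach_add_edge hreach' with hxyH | ⟨ha, hb⟩ | ⟨ha, hb⟩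
      · have := (isAcyclic_iff_forall_adj_isBridge.mp hac hH)
        rw [isBridge_iff] at this
        exact this hxyH
      · have hrx : H.Reachable r x := hrm.trans (ha.mono (deleteEdges_le _)).symm
        have hsy : H.Reachable s y := hsn.trans (hb.mono (deleteEdges_le _))
        exact hrs ((hrx.trans hH.reachable).trans hsy.symm)
      · have hsx : H.Reachable s x := hsn.trans (ha.mono (deleteEdges_le _)).symm
        have hry : H.Reachable r y := hrm.trans (hb.mono (deleteEdges_le _))
        exact hrs ((hry.trans hH.reachable.symm).trans hsx.symm)
  -- the path through (m,n)
  obtain ⟨w1⟩ := id hrm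
  obtain ⟨w2⟩ := id hsn
  classical
  let p1 : H.Walk r m := (w1.toPath : H.Path r m)
  let p2 : H.Walk n s := (w2.reverse.toPath : H.Path n s)
  have hp1 : p1.IsPath := (w1.toPath).2
  have hp2 : p2.IsPath := (w2.reverse.toPath).2
  have hsup1 : ∀ v ∈ p1.support, H.Reachable r v := fun v hv => reach_of_mem_support hv
  have hsup2 : ∀ v ∈ p2.support, H.Reachable s v := fun v hv =>
    hsn.trans (reach_of_mem_support hv)
  have hdisj : ∀ v ∈ p1.support, v ∉ p2.support := fun v h1 h2 =>
    hrs ((hsup1 v h1).trans (hsup2 v h2).symm)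
  let w : T.Walk r s := (p1.mapLe hHle).append (Walk.cons hTadj (p2.mapLe hHle))
  have hw : w.IsPath := by
    rw [Walk.isPath_def, Walk.support_append, Walk.support_cons, support_mapLe,
      support_mapLe, List.tail_cons]
    refine List.Nodup.append ((Walk.isPath_def _).mp hp1) ((Walk.isPath_def _).mp hp2) ?_
    intro v h1 h2
    exact hdisj v h1 h2
  have hdart : ∃ d ∈ w.darts, d.toProd = (m, n) := by
    refine ⟨⟨(m, n), hTadj⟩, ?_, rfl⟩
    rw [Walk.darts_append, Walk.darts_cons]
    exact List.mem_append_right _ List.mem_cons_self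
  exact ⟨⟨hconnT, hacT⟩, ⟨w, hw, hdart⟩, hHadj, hdel⟩
/-- `K` has a path from `r` to `s` through dart `(m, n)`. -/
def HPT (K : SimpleGraph V) (r s m n : V) : Prop :=
  ∃ p : K.Walk r s, p.IsPath ∧ ∃ d ∈ p.darts, d.toProd = (m, n)

lemma hpt_iff_dart_mem {K : SimpleGraph V} (hK : K.IsTree) {r s m n : V}
    {p : K.Walk r s} (hp : p.IsPath) :
    HPT K r s m n ↔ ∃ d ∈ p.darts, d.toProd = (m, n) := by
  constructor
  · rintro ⟨q, hq, hd⟩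
    rwa [(hK.existsUnique_path r s).unique hq hp] at hd
  · intro h
    exact ⟨p, hp, h⟩

lemma fromEdgeSet_le {G : SimpleGraph V} {m n : V} (he : G.Adj m n) :
    fromEdgeSet {s(m, n)} ≤ G := by
  intro x y hxy
  rw [fromEdgeSet_adj, Set.mem_singleton_iff, Sym2.eq_iff] at hxy
  rcases hxy.1 with ⟨rfl, rfl⟩ | ⟨rfl, rfl⟩
  · exact he
  · exact he.symm

lemma ncard_SA (G : SimpleGraph V) {r s m n : V} (he : G.Adj m n) :
    {K : SimpleGraph V | K ≤ G ∧ K.IsTree ∧ HPT K r s m n}.ncard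
      = {K : SimpleGraph V | K ≤ G ∧ TwoF K r s m n}.ncard := by
  have key : ∀ K ∈ {K : SimpleGraph V | K ≤ G ∧ K.IsTree ∧ HPT K r s m n},
      TwoF (K.deleteEdges {s(m,n)}) r s m n ∧ K.Adj m n := by
    rintro K ⟨hle, hT, p, hp, d, hd, hdp⟩
    exact tree_delete hT p hp hd hdp
  have hinj : Set.InjOn (fun K => K.deleteEdges {s(m,n)})
      {K : SimpleGraph V | K ≤ G ∧ K.IsTree ∧ HPT K r s m n} := by
    intro K1 h1 K2 h2 heq
    have e1 := sup_delete_eq (key K1 h1).2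
    have e2 := sup_delete_eq (key K2 h2).2
    simp only at heq
    rw [← e1, ← e2, heq]
  have himg : (fun K => K.deleteEdges {s(m,n)}) ''
      {K : SimpleGraph V | K ≤ G ∧ K.IsTree ∧ HPT K r s m n}
      = {K : SimpleGraph V | K ≤ G ∧ TwoF K r s m n} := by
    ext H
    constructor
    · rintro ⟨K, hK, rfl⟩
      exact ⟨le_trans (deleteEdges_le _) hK.1, (key K hK).1⟩
    · rintro ⟨hle, h2F⟩
      obtain ⟨hTree, hPath, hAdj, hDel⟩ := twoF_add h2F he.ne
      refine ⟨H ⊔ fromEdgeSet {s(m,n)}, ⟨sup_le hle (fromEdgeSet_le he), hTree, hPath⟩, hDel⟩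
  rw [← himg, Set.ncard_image_of_injOn hinj]

lemma spanningCoe_toSubgraph (G : SimpleGraph V) (K : SimpleGraph V) (h : K ≤ G) :
    (SimpleGraph.toSubgraph K h).spanningCoe = K := by
  ext x y
  rfl

lemma ncard_sub (G : SimpleGraph V) (P : SimpleGraph V → Prop) :
    {H : G.Subgraph | H.IsSpanning ∧ P H.spanningCoe}.ncard
      = {K : SimpleGraph V | K ≤ G ∧ P K}.ncard := by
  have hinj : Set.InjOn (fun H : G.Subgraph => H.spanningCoe)
      {H : G.Subgraph | H.IsSpanning ∧ P H.spanningCoe} := by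
    intro H1 h1 H2 h2 heq
    ext1
    · rw [Set.eq_univ_of_forall h1.1, Set.eq_univ_of_forall h2.1]
    · exact Subgraph.spanningCoe_inj.mp heq
  have himg : (fun H : G.Subgraph => H.spanningCoe) ''
      {H : G.Subgraph | H.IsSpanning ∧ P H.spanningCoe}
      = {K : SimpleGraph V | K ≤ G ∧ P K} := by
    ext K
    constructor
    · rintro ⟨H, ⟨hsp, hP⟩, rfl⟩
      exact ⟨H.spanningCoe_le, hP⟩
    · rintro ⟨hle, hP⟩
      exact ⟨SimpleGraph.toSubgraph K hle,
        ⟨SimpleGraph.toSubgraph.isSpanning K hle,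
          by rwa [spanningCoe_toSubgraph]⟩, spanningCoe_toSubgraph G K hle⟩
  rw [← himg, Set.ncard_image_of_injOn hinj]
open Matrix BigOperators


lemma lapMat_mulVec_eq {N : ℕ} (w : Fin N → Fin N → ℝ) (hw : ∀ v, w v v = 0)
    (x : Fin N → ℝ) (v : Fin N) :
    (lapMat w).mulVec x v = ∑ u, w v u * (x v - x u) := by
  show ∑ u, lapMat w v u * x u = _
  have hterm : ∀ u : Fin N, lapMat w v u * x u
      = (if u = v then (∑ k, w v k) * x v else 0) - w v u * x u := by
    intro u
    by_cases h : u = v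
    · subst h
      show (if u = u then _ else _) * x u = _
      rw [if_pos rfl, if_pos rfl, hw]
      ring
    · show (if v = u then _ else _) * x u = _
      rw [if_neg (Ne.symm h), if_neg h]
      ring
  rw [Finset.sum_congr rfl (fun u _ => hterm u), Finset.sum_sub_distrib,
    Finset.sum_ite_eq' Finset.univ v (fun _ => (∑ k, w v k) * x v)]
  simp only [Finset.mem_univ, if_true]
  rw [Finset.sum_mul, ← Finset.sum_sub_distrib]
  apply Finset.sum_congr rfl
  intro u _
  ring

lemma lap_zero_quad {N : ℕ} (w : Fin N → Fin N → ℝ) (hsymm : ∀ i j, w i j = w j i)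
    (hw : ∀ v, w v v = 0) (x : Fin N → ℝ) (h0 : (lapMat w).mulVec x = 0) :
    ∑ i, ∑ j, w i j * (x i - x j)^2 = 0 := by
  set A := ∑ i, ∑ j : Fin N, w i j * x i ^ 2 with hA
  set B := ∑ i, ∑ j : Fin N, w i j * x j ^ 2 with hB
  set C := ∑ i, ∑ j : Fin N, w i j * (x i * x j) with hC
  have h2 : B = A := by
    rw [hB, Finset.sum_comm]
    apply Finset.sum_congr rfl
    intro i _
    apply Finset.sum_congr rfl
    intro j _
    rw [hsymm]
  have hAC : A - C = 0 := by
    have hz : ∑ i, x i * (lapMat w).mulVec x i = 0 := by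
      rw [h0]
      simp
    have he : ∀ i : Fin N, x i * (lapMat w).mulVec x i
        = ∑ j, (w i j * x i ^ 2 - w i j * (x i * x j)) := by
      intro i
      rw [lapMat_mulVec_eq w hw, Finset.mul_sum]
      apply Finset.sum_congr rfl
      intro j _
      ring
    rw [Finset.sum_congr rfl (fun i _ => he i)] at hz
    simp_rw [Finset.sum_sub_distrib] at hz
    rw [hA, hC]
    linarith [hz]
  have hsplit : ∑ i, ∑ j, w i j * (x i - x j)^2 = A + B - 2*C := by
    have : ∀ i : Fin N, ∑ j, w i j * (x i - x j)^2
        = (∑ j, w i j * x i ^ 2) + (∑ j, w i j * x j ^ 2) - ∑ j, 2 * (w i j * (x i * x j)) := by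
      intro i
      rw [← Finset.sum_add_distrib, ← Finset.sum_sub_distrib]
      apply Finset.sum_congr rfl
      intro j _
      ring
    rw [Finset.sum_congr rfl (fun i _ => this i), Finset.sum_sub_distrib,
      Finset.sum_add_distrib]
    simp_rw [← Finset.mul_sum]
    rfl
  rw [hsplit]
  linarith [h2, hAC]

theorem main {N : ℕ} (G : SimpleGraph (Fin N))
    [DecidableRel G.Adj] (hconn : G.Connected)
    (r s m n : Fin N) (he : G.Adj m n)
    (ψ : Fin N → ℝ)
    (hψ : (lapMat (fun i j => if G.Adj i j then (1:ℝ) else 0)).mulVec ψ =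
      dipole r s) :
    ψ m - ψ n =
      ((Set.ncard {K : SimpleGraph (Fin N) | K ≤ G ∧ K.IsTree ∧ HPT K r s m n} : ℝ) -
        (Set.ncard {K : SimpleGraph (Fin N) | K ≤ G ∧ K.IsTree ∧ HPT K r s n m} : ℝ)) /
      (Set.ncard {K : SimpleGraph (Fin N) | K ≤ G ∧ K.IsTree} : ℝ) := by
  classical
  set w : Fin N → Fin N → ℝ := fun i j => if G.Adj i j then (1:ℝ) else 0 with hwdef
  have wdiag : ∀ v, w v v = 0 := fun v => if_neg (G.loopless.irrefl v)
  have wsymm : ∀ i j, w i j = w j i := by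
    intro i j
    show (if G.Adj i j then (1:ℝ) else 0) = (if G.Adj j i then (1:ℝ) else 0)
    by_cases h : G.Adj i j
    · rw [if_pos h, if_pos h.symm]
    · rw [if_neg h, if_neg (fun hc => h hc.symm)]
  have wnn : ∀ i j, (0:ℝ) ≤ w i j := by
    intro i j
    show (0:ℝ) ≤ if G.Adj i j then (1:ℝ) else 0
    split <;> norm_num
  set SB0 : Fin N → Set (SimpleGraph (Fin N)) := fun v =>
    {K | (K ≤ G ∧ (K.IsAcyclic ∧ (∀ x, K.Reachable r x ∨ K.Reachable s x) ∧
      ¬K.Reachable r s)) ∧ K.Reachable r v} with hSB0def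
  set φ : Fin N → ℝ := fun v => ((SB0 v).ncard : ℝ) with hφdef
  set TreeSet : Set (SimpleGraph (Fin N)) := {K | K ≤ G ∧ K.IsTree} with hTSdef
  have hTreeFin : TreeSet.Finite := Set.toFinite _
  set TF : Finset (SimpleGraph (Fin N)) := hTreeFin.toFinset with hTFdef
  set SAs : Fin N → Fin N → Set (SimpleGraph (Fin N)) := fun v u =>
    {K | K ≤ G ∧ K.IsTree ∧ HPT K r s v u} with hSAdef
  -- 2-forest set identity
  have hSB : ∀ v u : Fin N,
      {K : SimpleGraph (Fin N) | K ≤ G ∧ TwoF K r s v u} = SB0 v \ SB0 u := by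
    intro v u
    ext K
    simp only [Set.mem_setOf_eq, Set.mem_diff, hSB0def, TwoF]
    constructor
    · rintro ⟨hle, hac, hcov, hrs, hrv, hsu⟩
      exact ⟨⟨⟨hle, hac, hcov, hrs⟩, hrv⟩,
        fun hc => hrs (hc.2.trans hsu.symm)⟩
    · rintro ⟨⟨⟨hle, hac, hcov, hrs⟩, hrv⟩, hnot⟩
      refine ⟨hle, hac, hcov, hrs, hrv, ?_⟩
      rcases hcov u with h | h
      · exact absurd ⟨⟨hle, hac, hcov, hrs⟩, h⟩ hnot
      · exact h
  -- edge potential identity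
  have hE : ∀ v u, G.Adj v u →
      φ v - φ u = ((SAs v u).ncard : ℝ) - ((SAs u v).ncard : ℝ) := by
    intro v u hadj
    have h1 : (SAs v u).ncard = (SB0 v \ SB0 u).ncard := by
      rw [hSAdef]
      rw [ncard_SA G hadj, hSB v u]
    have h2 : (SAs u v).ncard = (SB0 u \ SB0 v).ncard := by
      rw [hSAdef]
      rw [ncard_SA G hadj.symm, hSB u v]
    have i1 := Set.ncard_inter_add_ncard_diff_eq_ncard (SB0 v) (SB0 u) (Set.toFinite _)
    have i2 := Set.ncard_inter_add_ncard_diff_eq_ncard (SB0 u) (SB0 v) (Set.toFinite _)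
    rw [Set.inter_comm] at i2
    have i1' := congrArg (Nat.cast : ℕ → ℝ) i1
    have i2' := congrArg (Nat.cast : ℕ → ℝ) i2
    push_cast at i1' i2'
    rw [hφdef]
    dsimp only
    rw [h1, h2]
    linarith
  -- tree-sum identity for counts
  have hInd : ∀ v u : Fin N, ((SAs v u).ncard : ℝ)
      = ∑ K ∈ TF, (if HPT K r s v u then (1:ℝ) else 0) := by
    intro v u
    have hset : SAs v u = {K | K ∈ TreeSet ∧ HPT K r s v u} := by
      ext K
      simp only [hSAdef, hTSdef, Set.mem_setOf_eq, and_assoc]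
    rw [hset, Set.ncard_eq_toFinset_card _ (Set.toFinite _)]
    have hfil : (Set.toFinite {K | K ∈ TreeSet ∧ HPT K r s v u}).toFinset
        = TF.filter (fun K => HPT K r s v u) := by
      ext K
      simp only [Set.Finite.mem_toFinset, Set.mem_setOf_eq, Finset.mem_filter, hTFdef]
    rw [hfil, Finset.card_filter]
    push_cast
    rfl
  -- per-tree divergence
  have hTree_inner : ∀ K ∈ TF, ∀ v : Fin N,
      ∑ u, (if G.Adj v u then ((if HPT K r s v u then (1:ℝ) else 0)
          - (if HPT K r s u v then (1:ℝ) else 0)) else 0)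
      = (if v = r then (1:ℝ) else 0) - (if v = s then (1:ℝ) else 0) := by
    intro K hK v
    rw [hTFdef, hTreeFin.mem_toFinset, hTSdef] at hK
    obtain ⟨hle, hKT⟩ := hK
    obtain ⟨p, hp, -⟩ := hKT.existsUnique_path r s
    have hterm : ∀ u, (if G.Adj v u then ((if HPT K r s v u then (1:ℝ) else 0)
          - (if HPT K r s u v then (1:ℝ) else 0)) else 0)
        = (if (∃ d ∈ p.darts, d.toProd = (v,u)) then (1:ℝ) else 0)
          - (if (∃ d ∈ p.darts, d.toProd = (u,v)) then (1:ℝ) else 0) := by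
      intro u
      have hd1 : (∃ d ∈ p.darts, d.toProd = (v,u)) ↔ HPT K r s v u :=
        (hpt_iff_dart_mem hKT hp).symm
      have hd2 : (∃ d ∈ p.darts, d.toProd = (u,v)) ↔ HPT K r s u v :=
        (hpt_iff_dart_mem hKT hp).symm
      by_cases hadj : G.Adj v u
      · rw [if_pos hadj, if_congr hd1 rfl rfl, if_congr hd2 rfl rfl]
      · have e1 : ¬(∃ d ∈ p.darts, d.toProd = (v,u)) := by
          rintro ⟨d, hd, hdp⟩
          have hKadj := d.adj
          rw [show d.toProd.1 = v from congrArg Prod.fst hdp,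
            show d.toProd.2 = u from congrArg Prod.snd hdp] at hKadj
          exact hadj (hle hKadj)
        have e2 : ¬(∃ d ∈ p.darts, d.toProd = (u,v)) := by
          rintro ⟨d, hd, hdp⟩
          have hKadj := d.adj
          rw [show d.toProd.1 = u from congrArg Prod.fst hdp,
            show d.toProd.2 = v from congrArg Prod.snd hdp] at hKadj
          exact hadj (hle hKadj).symm
        rw [if_neg hadj, if_neg e1, if_neg e2]
        norm_num
    rw [Finset.sum_congr rfl (fun u _ => hterm u)]
    exact walk_div p hp v
  -- Laplacian of the 2-forest potential
  have hLφ : (lapMat w).mulVec φ = fun v => (TF.card : ℝ) * dipole r s v := by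
    funext v
    rw [lapMat_mulVec_eq w wdiag]
    have hstep : ∀ u, w v u * (φ v - φ u)
        = ∑ K ∈ TF, (if G.Adj v u then ((if HPT K r s v u then (1:ℝ) else 0)
            - (if HPT K r s u v then (1:ℝ) else 0)) else 0) := by
      intro u
      by_cases hadj : G.Adj v u
      · have hw1 : w v u = 1 := if_pos hadj
        rw [hw1, one_mul, hE v u hadj, hInd v u, hInd u v, ← Finset.sum_sub_distrib]
        exact Finset.sum_congr rfl (fun K _ => (if_pos hadj).symm)
      · have hw0 : w v u = 0 := if_neg hadj
        rw [hw0, zero_mul]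
        exact (Finset.sum_eq_zero (fun K _ => if_neg hadj)).symm
    rw [Finset.sum_congr rfl (fun u _ => hstep u), Finset.sum_comm,
      Finset.sum_congr rfl (fun K hK => hTree_inner K hK v), Finset.sum_const,
      nsmul_eq_mul]
    rfl
  -- number of spanning trees is positive
  have hNt : 0 < TF.card := by
    obtain ⟨T, hT1, hT2⟩ := exists_tree_le G hconn
    exact Finset.card_pos.mpr ⟨T, hTreeFin.mem_toFinset.mpr ⟨hT1, hT2⟩⟩
  have hNtR : (TF.card : ℝ) ≠ 0 := Nat.cast_ne_zero.mpr hNt.ne'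
  -- the harmonic difference
  set x : Fin N → ℝ := fun v => ψ v - φ v / TF.card with hxdef
  have hx0 : (lapMat w).mulVec x = 0 := by
    have hxe : x = ψ - (TF.card : ℝ)⁻¹ • φ := by
      funext v
      rw [hxdef]
      simp only [Pi.sub_apply, Pi.smul_apply, smul_eq_mul]
      ring
    rw [hxe, Matrix.mulVec_sub, Matrix.mulVec_smul, hψ, hLφ]
    funext v
    simp only [Pi.sub_apply, Pi.smul_apply, Pi.zero_apply, smul_eq_mul]
    field_simp
    ring
  have hquad := lap_zero_quad w wsymm wdiag x hx0
  have hz1 := (Finset.sum_eq_zero_iff_of_nonneg (fun i _ => Finset.sum_nonneg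
    (fun j _ => mul_nonneg (wnn i j) (sq_nonneg _)))).mp hquad
  have hz2 := (Finset.sum_eq_zero_iff_of_nonneg
    (fun j _ => mul_nonneg (wnn m j) (sq_nonneg _))).mp
    (hz1 m (Finset.mem_univ m)) n (Finset.mem_univ n)
  have hwmn : w m n = 1 := if_pos he
  rw [hwmn, one_mul] at hz2
  have hxmn : x m = x n := by
    have := pow_eq_zero_iff (n := 2) (by norm_num) |>.mp hz2
    linarith [sub_eq_zero.mp this]
  -- conclude
  have hgoal1 : ψ m - ψ n = (φ m - φ n) / TF.card := by
    rw [hxdef] at hxmn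
    simp only at hxmn
    field_simp at hxmn ⊢
    linarith
  have hTFcard : ({K : SimpleGraph (Fin N) | K ≤ G ∧ K.IsTree}).ncard = TF.card := by
    rw [hTFdef, ← hTSdef, Set.ncard_eq_toFinset_card _ hTreeFin]
  rw [show {K : SimpleGraph (Fin N) | K ≤ G ∧ K.IsTree ∧ HPT K r s m n} = SAs m n from rfl,
    show {K : SimpleGraph (Fin N) | K ≤ G ∧ K.IsTree ∧ HPT K r s n m} = SAs n m from rfl,
    hTFcard, hgoal1, hE m n he]
theorem shapiro_electrical_lemma' {N : ℕ} (G : SimpleGraph (Fin N))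
    [DecidableRel G.Adj] (hconn : G.Connected)
    (r s m n : Fin N) (he : G.Adj m n)
    (ψ : Fin N → ℝ)
    (hψ : (lapMat (fun i j => if G.Adj i j then (1:ℝ) else 0)).mulVec ψ =
      dipole r s) :
    ψ m - ψ n =
      ((Set.ncard {H : G.Subgraph | (H.IsSpanning ∧ H.spanningCoe.IsTree) ∧ HPT H.spanningCoe r s m n}
          : ℝ) -
        (Set.ncard {H : G.Subgraph | (H.IsSpanning ∧ H.spanningCoe.IsTree) ∧ HPT H.spanningCoe r s n m}
          : ℝ)) /
      (Set.ncard {H : G.Subgraph | H.IsSpanning ∧ H.spanningCoe.IsTree} : ℝ) := by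
  have conv1 : ∀ m' n' : Fin N,
      {H : G.Subgraph | (H.IsSpanning ∧ H.spanningCoe.IsTree) ∧ HPT H.spanningCoe r s m' n'}.ncard
      = {K : SimpleGraph (Fin N) | K ≤ G ∧ K.IsTree ∧ HPT K r s m' n'}.ncard := by
    intro m' n'
    rw [show {H : G.Subgraph | (H.IsSpanning ∧ H.spanningCoe.IsTree) ∧ HPT H.spanningCoe r s m' n'}
        = {H : G.Subgraph | H.IsSpanning ∧
            (fun K => K.IsTree ∧ HPT K r s m' n') H.spanningCoe} from ?_]
    · exact ncard_sub G (fun K => K.IsTree ∧ HPT K r s m' n')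
    · ext H
      simp only [Set.mem_setOf_eq]
      exact ⟨fun ⟨⟨a, b⟩, c⟩ => ⟨a, b, c⟩, fun ⟨a, b, c⟩ => ⟨⟨a, b⟩, c⟩⟩
  have conv2 : {H : G.Subgraph | H.IsSpanning ∧ H.spanningCoe.IsTree}.ncard
      = {K : SimpleGraph (Fin N) | K ≤ G ∧ K.IsTree}.ncard := ncard_sub G (fun K => K.IsTree)
  rw [conv1, conv1, conv2]
  exact main G hconn r s m n he ψ hψ

end Aux

theorem shapiro_electrical_lemma {N : ℕ} (G : SimpleGraph (Fin N))
    [DecidableRel G.Adj] (hconn : G.Connected)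
    (r s m n : Fin N) (he : G.Adj m n)
    (ψ : Fin N → ℝ)
    (hψ : (lapMat (fun i j => if G.Adj i j then (1:ℝ) else 0)).mulVec ψ =
      dipole r s) :
    ψ m - ψ n =
      ((Set.ncard {H : G.Subgraph | IsSpanningTree H ∧ HasPathThrough H r s m n}
          : ℝ) -
        (Set.ncard {H : G.Subgraph | IsSpanningTree H ∧ HasPathThrough H r s n m}
          : ℝ)) /
      (Set.ncard {H : G.Subgraph | IsSpanningTree H} : ℝ) := by
  exact shapiro_electrical_lemma' G hconn r s m n he ψ hψ
end
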